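/- arXiv:1705.00465 — 6 statements merged into one kernel-verified Lean document; each statement's English description precedes it below -/
import Mathlib

section
/- Deterministic uniform approximation at the true quantile function: let γ0 > −1/2, γ0 ≠ 0, let k_n → ∞ and r_n → ∞ with r_n = O(k_n^δ) for some 0 < δ < min(1/2, γ0 + 1/2), and let H_n be the closed ball in ℝ³ of center 0 and radius r_n. Then sup over s ∈ [1/(k_n+1), k_n/(k_n+1)] and h = (h1,h2,h3) ∈ H_n of | (−log s)^{−1} ( 1 + (γ0 + h1/√k_n) · (Q_{γ0}(s) − h2/√k_n)/(1 + h3/√k_n) )^{−1/(γ0 + h1/√k_n)} − 1 | converges to 0 as n → ∞. -/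
open MeasureTheory ProbabilityTheory Filter Real Topology Matrix Set

noncomputable section

namespace BMMLE

/-- The real-valued GEV log-likelihood `ℓ(θ, x)` with `θ = (γ, μ, σ)`
(junk value off the support; for `γ = 0` the usual Gumbel limit formula). -/
def ll (θ : Fin 3 → ℝ) (x : ℝ) : ℝ :=
  if θ 0 = 0 then -((x - θ 1) / θ 2) - Real.exp (-((x - θ 1) / θ 2)) - Real.log (θ 2)
  else -(1 + 1 / θ 0) * Real.log (1 + θ 0 * ((x - θ 1) / θ 2))
    - (1 + θ 0 * ((x - θ 1) / θ 2)) ^ (-1 / θ 0) - Real.log (θ 2)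

/-- Partial derivative of a function of `θ ∈ ℝ³` in the `i`-th coordinate. -/
def pd (f : (Fin 3 → ℝ) → ℝ) (i : Fin 3) (θ : Fin 3 → ℝ) : ℝ :=
  deriv (fun t => f (Function.update θ i t)) (θ i)

/-- The score `∂ℓ/∂θᵢ`. -/
def score (i : Fin 3) (θ : Fin 3 → ℝ) (x : ℝ) : ℝ := pd (fun θ' => ll θ' x) i θ

/-- Second derivatives `∂²ℓ/∂θᵢ∂θⱼ`. -/
def hessll (i j : Fin 3) (θ : Fin 3 → ℝ) (x : ℝ) : ℝ := pd (fun θ' => score j θ' x) i θ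

/-- Mixed derivative `∂²ℓ/∂x∂θᵢ`. -/
def dxscore (i : Fin 3) (θ : Fin 3 → ℝ) (x : ℝ) : ℝ := deriv (fun y => score i θ y) x

/-- θ₀ = (γ, 0, 1). -/
def θ₀ (γ : ℝ) : Fin 3 → ℝ := ![γ, 0, 1]

/-- The GEV quantile function `Q_γ(s)`. -/
def Qgev (γ s : ℝ) : ℝ :=
  if γ = 0 then -Real.log (-Real.log s) else ((-Real.log s) ^ (-γ) - 1) / γ

/-- The second-order limit function `H_{γ,ρ}(x) = ∫_1^x t^{γ-1} ∫_1^t u^{ρ-1} du dt`. -/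
def Hso (γ ρ x : ℝ) : ℝ := ∫ t in (1:ℝ)..x, t ^ (γ - 1) * ∫ u in (1:ℝ)..t, u ^ (ρ - 1)

/-- The Fisher information matrix `I_{θ₀} = -∫₀¹ ∂²ℓ/∂θ∂θᵀ(θ₀, Q_γ(s)) ds`. -/
def infoMatrix (γ : ℝ) : Matrix (Fin 3) (Fin 3) ℝ :=
  Matrix.of fun i j => -∫ s in Set.Ioo (0:ℝ) 1, hessll i j (θ₀ γ) (Qgev γ s)

/-- The bias vector `b = ∫₀¹ ∂²ℓ/∂x∂θ(θ₀, Q_γ(s)) H_{γ,ρ}(1/(-log s)) ds`. -/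
def biasVec (γ ρ : ℝ) : Fin 3 → ℝ := fun i =>
  ∫ s in Set.Ioo (0:ℝ) 1, dxscore i (θ₀ γ) (Qgev γ s) * Hso γ ρ (1 / (-Real.log s))

/-- The (nondegenerate) trivariate normal distribution `N(μ, S)`, defined via its
Lebesgue density. -/
def mvNormal (μ : Fin 3 → ℝ) (S : Matrix (Fin 3) (Fin 3) ℝ) : Measure (Fin 3 → ℝ) :=
  (volume : Measure (Fin 3 → ℝ)).withDensity fun x =>
    ENNReal.ofReal (Real.sqrt (((2 * Real.pi) ^ (3 : ℕ) * S.det)⁻¹) *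
      Real.exp (-(1 / 2) * ((x - μ) ⬝ᵥ (S⁻¹ *ᵥ (x - μ)))))

/-- Convergence in distribution of `ℝ³`-valued random vectors: integrals of every
bounded continuous function converge. -/
def TendstoInDist {Ω : Type*} [MeasurableSpace Ω] (P : Measure Ω)
    (Y : ℕ → Ω → (Fin 3 → ℝ)) (ν : Measure (Fin 3 → ℝ)) : Prop :=
  ∀ f : BoundedContinuousFunction (Fin 3 → ℝ) ℝ,
    Tendsto (fun n => ∫ ω, f (Y n ω) ∂P) atTop (𝓝 (∫ x, f x ∂ν))

/-- The left-continuous generalized inverse `V = (-1/log F)^←`. -/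
def Vfun (F : ℝ → ℝ) (t : ℝ) : ℝ := sInf {x : ℝ | t ≤ -1 / Real.log (F x)}

/-- The `i`-th block maximum of block size `m`: `max_{(i-1)m < j ≤ im} X_j`. -/
def blockMax {Ω : Type*} (X : ℕ → Ω → ℝ) (i m : ℕ) (ω : Ω) : ℝ :=
  sSup ((fun j => X j ω) '' Set.Ioc ((i - 1) * m) (i * m))

/-- The second-order condition: `γ₀ > -1/2`, `ρ ≤ 0`, `a` positive, `A` of constant
sign tending to `0`, and the second-order regular variation limit for
`V = (-1/log F)^←` with `H_{γ₀,ρ}` as limit function. -/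
structure SecondOrder (F : ℝ → ℝ) (γ₀ ρ : ℝ) (a A : ℝ → ℝ) : Prop where
  hγ : -(1/2) < γ₀
  hρ : ρ ≤ 0
  ha : ∀ t, 0 < a t
  hsign : (∀ t, 0 < A t) ∨ (∀ t, A t < 0)
  hA0 : Tendsto A atTop (𝓝 0)
  hlim : ∀ x > 0, Tendsto (fun t =>
      ((Vfun F (t * x) - Vfun F t) / a t -
        (if γ₀ = 0 then Real.log x else (x ^ γ₀ - 1) / γ₀)) / A t)
    atTop (𝓝 (Hso γ₀ ρ x))

/-- The local log-likelihood process
`L̃_{k,m}(h) = Σ_{i=1}^k ℓ(θ₀ + h/√k, (M_{i,m} - b_m)/a_m) - k log a_m`. -/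
def Ltil {Ω : Type*} (X : ℕ → Ω → ℝ) (γ : ℝ) (k m : ℕ) (am bm : ℝ)
    (ω : Ω) (h : Fin 3 → ℝ) : ℝ :=
  (∑ i ∈ Finset.Icc 1 k,
    ll (fun j => θ₀ γ j + h j / Real.sqrt (k : ℝ)) ((blockMax X i m ω - bm) / am))
  - (k : ℝ) * Real.log am

/-- The normalized score vector
`G̃_{k,m} = k^{-1/2} Σ_{i=1}^k ∂ℓ/∂θ(θ₀, (M_{i,m} - b_m)/a_m)`. -/
def Gtil {Ω : Type*} (X : ℕ → Ω → ℝ) (γ : ℝ) (k m : ℕ) (am bm : ℝ)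
    (ω : Ω) : Fin 3 → ℝ := fun j =>
  (Real.sqrt (k : ℝ))⁻¹ *
    ∑ i ∈ Finset.Icc 1 k, score j (θ₀ γ) ((blockMax X i m ω - bm) / am)

end BMMLE

namespace BMMLE

set_option maxHeartbeats 1000000

lemma abs_log_le_two_mul {x : ℝ} (hx : 1/2 ≤ x) : |Real.log x| ≤ 2 * |x - 1| := by
  have hx0 : 0 < x := by linarith
  rcases le_or_gt 1 x with h | h
  · rw [abs_of_nonneg (Real.log_nonneg h), abs_of_nonneg (by linarith)]
    have := Real.log_le_sub_one_of_pos hx0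
    linarith
  · rw [abs_of_nonpos (Real.log_nonpos hx0.le h.le), abs_of_neg (by linarith)]
    have h2 : Real.log x⁻¹ ≤ x⁻¹ - 1 := Real.log_le_sub_one_of_pos (by positivity)
    rw [Real.log_inv] at h2
    have hinv : x * x⁻¹ = 1 := mul_inv_cancel₀ hx0.ne'
    nlinarith [h2]

lemma key_est (γ0 u v w t M e : ℝ) (hγ0 : γ0 ≠ 0) (ht : 0 < t)
    (hM1 : 1 ≤ M) (hMt : t ^ γ0 ≤ M)
    (hu : |u| ≤ e) (hv : |v| ≤ e) (hw : |w| ≤ e)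
    (he2 : e ≤ 1/2) (heγ : e ≤ |γ0|/2)
    (hS1 : (6 + 4/|γ0| + 2*|γ0|) * (e * M) ≤ 1/2)
    (hS2 : ((2 + 4*(6 + 4/|γ0| + 2*|γ0|))/|γ0|) * (e * (|Real.log t| + M)) ≤ 1) :
    |t⁻¹ * (1 + (γ0 + u) * (((t ^ (-γ0) - 1)/γ0 - v)/(1 + w))) ^ (-1/(γ0 + u)) - 1|
      ≤ 2 * (((2 + 4*(6 + 4/|γ0| + 2*|γ0|))/|γ0|) * (e * (|Real.log t| + M))) := by
  have hγpos : 0 < |γ0| := abs_pos.mpr hγ0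
  obtain ⟨C1, hC1def⟩ : ∃ C1:ℝ, C1 = 6 + 4/|γ0| + 2*|γ0| := ⟨_, rfl⟩
  rw [← hC1def]
  obtain ⟨C2, hC2def⟩ : ∃ C2:ℝ, C2 = (2 + 4*C1)/|γ0| := ⟨_, rfl⟩
  rw [← hC2def]
  rw [← hC1def] at hS1
  rw [← hC1def, ← hC2def] at hS2
  have hC1pos : 0 < C1 := by rw [hC1def]; positivity
  have hC2pos : 0 < C2 := by rw [hC2def]; positivity
  have hC1nn : 0 ≤ C1 := hC1pos.le
  have hC2nn : 0 ≤ C2 := hC2pos.le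
  have he0 : 0 ≤ e := le_trans (abs_nonneg u) hu
  have habsu := abs_le.mp hu
  have habsv := abs_le.mp hv
  have habsw := abs_le.mp hw
  have hγh : |γ0|/2 ≤ |γ0 + u| := by
    have h1 : |γ0| ≤ |γ0 + u| + |u| := by
      calc |γ0| = |(γ0 + u) - u| := by ring_nf
      _ ≤ |γ0 + u| + |u| := abs_sub _ _
    linarith
  have hγhpos : 0 < |γ0 + u| := lt_of_lt_of_le (by linarith) hγh
  have hγhne : γ0 + u ≠ 0 := fun h => by simp [h] at hγhpos
  have hγhub : |γ0 + u| ≤ |γ0| + 1 := by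
    calc |γ0 + u| ≤ |γ0| + |u| := abs_add_le _ _
    _ ≤ |γ0| + 1 := by linarith
  have hw1 : (1:ℝ)/2 ≤ 1 + w := by linarith
  have hw1pos : (0:ℝ) < 1 + w := by linarith
  have hw1ne : (1:ℝ) + w ≠ 0 := by linarith
  obtain ⟨P, hPdef⟩ : ∃ P:ℝ, P = t ^ γ0 := ⟨_, rfl⟩
  rw [← hPdef] at hMt
  have hP : 0 < P := hPdef ▸ Real.rpow_pos_of_pos ht γ0
  have hPneg : t ^ (-γ0) = P⁻¹ := by rw [hPdef]; exact Real.rpow_neg ht.le γ0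
  obtain ⟨B, hBdef⟩ : ∃ B:ℝ, B = 1 + ((P - 1)*(w - u/γ0) - (γ0+u)*v*P)/(1+w) := ⟨_, rfl⟩
  have hBA : 1 + (γ0 + u) * ((P⁻¹ - 1)/γ0 - v)/(1 + w) = P⁻¹ * B := by
    rw [hBdef]; field_simp; ring
  have hPabs : |P - 1| ≤ 2 * M := by
    rw [abs_sub_le_iff]
    constructor <;> nlinarith [hP, hMt]
  have hnum : |(P - 1)*(w - u/γ0) - (γ0+u)*v*P| ≤ (C1/2) * (e * M) := by
    have h1 : |(P - 1)*(w - u/γ0)| ≤ (2*M) * (e * (1 + 1/|γ0|)) := by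
      rw [abs_mul]
      have h2 : |w - u/γ0| ≤ e * (1 + 1/|γ0|) := by
        calc |w - u/γ0| ≤ |w| + |u/γ0| := abs_sub _ _
        _ = |w| + |u|/|γ0| := by rw [abs_div]
        _ ≤ e + e/|γ0| := by gcongr
        _ = e * (1 + 1/|γ0|) := by ring
      exact mul_le_mul hPabs h2 (abs_nonneg _) (by positivity)
    have h3 : |(γ0+u)*v*P| ≤ (|γ0|+1) * (e * M) := by
      rw [abs_mul, abs_mul, abs_of_pos hP]
      calc |γ0+u| * |v| * P ≤ ((|γ0|+1) * e) * M :=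
            mul_le_mul (mul_le_mul hγhub hv (abs_nonneg _) (by positivity)) hMt hP.le
              (by positivity)
      _ = (|γ0|+1) * (e * M) := by ring
    calc |(P - 1)*(w - u/γ0) - (γ0+u)*v*P| ≤ |(P - 1)*(w - u/γ0)| + |(γ0+u)*v*P| := abs_sub _ _
    _ ≤ (2*M) * (e * (1 + 1/|γ0|)) + (|γ0|+1) * (e * M) := by linarith
    _ = (C1/2) * (e * M) := by rw [hC1def]; field_simp [hγpos.ne']; ring
  have hB1 : |B - 1| ≤ C1 * (e * M) := by
    have hBm : B - 1 = ((P - 1)*(w - u/γ0) - (γ0+u)*v*P)/(1+w) := by rw [hBdef]; ring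
    rw [hBm, abs_div, abs_of_pos hw1pos, div_le_iff₀ hw1pos]
    have hnn : 0 ≤ C1 * (e * M) := by
      have : 0 < C1 := hC1pos
      positivity
    have h7 := mul_le_mul_of_nonneg_left hw1 hnn
    linarith
  have hB12 : |B - 1| ≤ 1/2 := le_trans hB1 hS1
  have hBhalf : (1:ℝ)/2 ≤ B := by have := abs_le.mp hB12; linarith [this.1]
  have hBpos : 0 < B := by linarith
  have hlogB : |Real.log B| ≤ 2 * (C1 * (e * M)) := by
    calc |Real.log B| ≤ 2 * |B - 1| := abs_log_le_two_mul hBhalf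
    _ ≤ 2 * (C1 * (e * M)) := by linarith
  have hApos : 0 < P⁻¹ * B := by positivity
  obtain ⟨L, hLdef⟩ : ∃ L:ℝ, L = (-(u * Real.log t) - Real.log B)/(γ0+u) := ⟨_, rfl⟩
  have hE : t⁻¹ * (1 + (γ0 + u) * (((t ^ (-γ0) - 1)/γ0 - v)/(1 + w))) ^ (-1/(γ0 + u))
      = Real.exp L := by
    have h1 : (1 : ℝ) + (γ0 + u) * (((t ^ (-γ0) - 1)/γ0 - v)/(1 + w)) = P⁻¹ * B := by
      rw [hPneg, ← hBA]; ring
    rw [h1, Real.rpow_def_of_pos hApos]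
    rw [Real.log_mul (by positivity) hBpos.ne', Real.log_inv, hPdef, Real.log_rpow ht]
    rw [← Real.exp_log ht, ← Real.exp_neg, ← Real.exp_add]
    congr 1
    rw [hLdef, Real.exp_log ht]
    field_simp
    ring
  rw [hE]
  have hnum2 : |(-(u * Real.log t) - Real.log B)| ≤ e * |Real.log t| + 2 * (C1 * (e * M)) := by
    calc |(-(u * Real.log t) - Real.log B)| ≤ |(-(u * Real.log t))| + |Real.log B| := abs_sub _ _
    _ = |u| * |Real.log t| + |Real.log B| := by rw [abs_neg, abs_mul]
    _ ≤ e * |Real.log t| + 2 * (C1 * (e * M)) := by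
        have := mul_le_mul_of_nonneg_right hu (abs_nonneg (Real.log t))
        linarith
  have hL1 : |L| ≤ C2 * (e * (|Real.log t| + M)) := by
    rw [hLdef, abs_div, div_le_iff₀ hγhpos]
    have hkey : C2 * (e * (|Real.log t| + M)) * (|γ0|/2)
        = (1 + 2*C1) * (e * (|Real.log t| + M)) := by
      rw [hC2def]; field_simp [hγpos.ne']; ring
    have h5 : e * |Real.log t| + 2 * (C1 * (e * M))
        ≤ C2 * (e * (|Real.log t| + M)) * (|γ0|/2) := by
      rw [hkey]
      nlinarith [mul_nonneg he0 (abs_nonneg (Real.log t)),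
        mul_nonneg he0 (le_trans zero_le_one hM1), hC1pos.le]
    have h6 : C2 * (e * (|Real.log t| + M)) * (|γ0|/2)
        ≤ C2 * (e * (|Real.log t| + M)) * |γ0+u| :=
      mul_le_mul_of_nonneg_left hγh (by
        have h8 : 0 ≤ e * (|Real.log t| + M) := by positivity
        exact mul_nonneg hC2nn h8)
    linarith
  have hL2 : |L| ≤ 1 := le_trans hL1 hS2
  calc |Real.exp L - 1| ≤ 2 * |L| := Real.abs_exp_sub_one_le hL2
  _ ≤ 2 * (C2 * (e * (|Real.log t| + M))) := by linarith


lemma tendstoP (γ0 : ℝ) (hγ0 : γ0 ≠ 0) (C' δ : ℝ) (hC' : 0 ≤ C') (hδ0 : 0 < δ)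
    (hδ1 : δ < 1/2) (hδ2 : δ < γ0 + 1/2) :
    Filter.Tendsto (fun x : ℝ => (C' * x ^ δ / Real.sqrt x) *
      (Real.log (x+1) + max (max ((1/(x+1)) ^ γ0) ((Real.log (x+1)) ^ γ0)) 1))
      atTop (𝓝 0) := by
  have hγabs : (0:ℝ) ≤ |γ0| := abs_nonneg γ0
  obtain ⟨b, hbdef⟩ : ∃ b:ℝ, b = (1/2 - δ)/(2*(1+|γ0|)) := ⟨_, rfl⟩
  have hb : 0 < b := by rw [hbdef]; exact div_pos (by linarith) (by positivity)
  obtain ⟨m, hmdef⟩ : ∃ m:ℝ, m = max (-γ0) 0 := ⟨_, rfl⟩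
  obtain ⟨q, hqdef⟩ : ∃ q:ℝ, q = max γ0 0 := ⟨_, rfl⟩
  have hm0 : 0 ≤ m := hmdef ▸ le_max_right _ _
  have hq0 : 0 ≤ q := hqdef ▸ le_max_right _ _
  obtain ⟨cm, hcmdef⟩ : ∃ cm:ℝ, cm = (2:ℝ) ^ m := ⟨_, rfl⟩
  have hcm0 : 0 < cm := hcmdef ▸ Real.rpow_pos_of_pos two_pos m
  -- exponent negativity
  have hb' : b ≤ (1/2 - δ)/2 := by
    rw [hbdef]
    apply div_le_div_of_nonneg_left (by linarith) two_pos
    linarith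
  have hbq : b * q ≤ (1/2 - δ)/2 := by
    have hq' : q ≤ 1 + |γ0| := by
      rw [hqdef]
      exact max_le (le_trans (le_abs_self γ0) (by linarith)) (by linarith)
    have h1 : b * q ≤ b * (1 + |γ0|) := mul_le_mul_of_nonneg_left hq' hb.le
    have h2 : b * (1 + |γ0|) = (1/2 - δ)/2 := by
      rw [hbdef]; field_simp
    linarith
  have he1 : δ - 1/2 + b < 0 := by linarith
  have he2 : δ - 1/2 + m < 0 := by
    have : m < 1/2 - δ := by
      rw [hmdef]; exact max_lt (by linarith) (by linarith)
    linarith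
  have he3 : δ - 1/2 + b * q < 0 := by nlinarith
  have he4 : δ - 1/2 < 0 := by linarith
  -- limit of the dominating function
  have t1 : Tendsto (fun x:ℝ => x ^ (δ - 1/2 + b)) atTop (𝓝 0) := by
    simpa using tendsto_rpow_neg_atTop (show (0:ℝ) < -(δ - 1/2 + b) by linarith)
  have t2 : Tendsto (fun x:ℝ => x ^ (δ - 1/2 + m)) atTop (𝓝 0) := by
    simpa using tendsto_rpow_neg_atTop (show (0:ℝ) < -(δ - 1/2 + m) by linarith)
  have t3 : Tendsto (fun x:ℝ => x ^ (δ - 1/2 + b * q)) atTop (𝓝 0) := by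
    simpa using tendsto_rpow_neg_atTop (show (0:ℝ) < -(δ - 1/2 + b * q) by linarith)
  have t4 : Tendsto (fun x:ℝ => x ^ (δ - 1/2)) atTop (𝓝 0) := by
    simpa using tendsto_rpow_neg_atTop (show (0:ℝ) < -(δ - 1/2) by linarith)
  have tg : Tendsto (fun x:ℝ => C' * (x ^ (δ-1/2+b) + cm * x ^ (δ-1/2+m)
      + x ^ (δ-1/2+b*q) + x ^ (δ-1/2))) atTop (𝓝 0) := by
    have := (((t1.add (t2.const_mul cm)).add t3).add t4).const_mul C'
    simpa using this
  -- squeeze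
  apply squeeze_zero' ?_ ?_ tg
  · have hlog := (isLittleO_log_rpow_atTop hb).bound (by norm_num : (0:ℝ) < 1/2)
    filter_upwards [eventually_ge_atTop (3:ℝ)] with x hx3
    have hx0 : (0:ℝ) < x := by linarith
    have hlog1 : (0:ℝ) ≤ Real.log (x+1) := Real.log_nonneg (by linarith)
    have hmax1 : (1:ℝ) ≤ max (max ((1/(x+1)) ^ γ0) ((Real.log (x+1)) ^ γ0)) 1 :=
      le_max_right _ _
    positivity
  · have hlog := (isLittleO_log_rpow_atTop hb).bound (by norm_num : (0:ℝ) < 1/2)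
    filter_upwards [hlog, eventually_ge_atTop (3:ℝ)] with x hlx hx3
    have hx0 : (0:ℝ) < x := by linarith
    have hx10 : (0:ℝ) < x + 1 := by linarith
    have hlog1 : (0:ℝ) ≤ Real.log (x+1) := Real.log_nonneg (by linarith)
    -- log (x+1) ≤ x ^ b
    have hL1 : Real.log (x+1) ≤ x ^ b := by
      have h1 : x + 1 ≤ x^(2:ℕ) := by nlinarith
      have h2 : Real.log (x+1) ≤ Real.log (x^(2:ℕ)) := Real.log_le_log hx10 h1
      rw [Real.log_pow] at h2
      have h3 : Real.log x ≤ 1/2 * x ^ b := by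
        have h4 := hlx
        rw [Real.norm_eq_abs, Real.norm_eq_abs, abs_of_nonneg (Real.rpow_nonneg hx0.le b)] at h4
        calc Real.log x ≤ |Real.log x| := le_abs_self _
        _ ≤ 1/2 * x ^ b := h4
      push_cast at h2
      linarith
    -- 1 ≤ log (x+1)
    have hlogge1 : (1:ℝ) ≤ Real.log (x+1) := by
      rw [Real.le_log_iff_exp_le hx10]
      have := Real.exp_one_lt_d9
      linarith
    have hxb0 : (0:ℝ) ≤ x ^ b := Real.rpow_nonneg hx0.le b
    have hxm0 : (0:ℝ) ≤ x ^ m := Real.rpow_nonneg hx0.le m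
    have hxbq0 : (0:ℝ) ≤ x ^ (b*q) := Real.rpow_nonneg hx0.le (b*q)
    have hxq1 : (1:ℝ) ≤ x ^ m := Real.one_le_rpow (by linarith : (1:ℝ) ≤ x) hm0
    have hcm1 : (1:ℝ) ≤ cm := by
      rw [hcmdef]; exact Real.one_le_rpow one_le_two hm0
    have hcmxm1 : (1:ℝ) ≤ cm * x ^ m := by nlinarith
    have hMle : max (max ((1/(x+1)) ^ γ0) ((Real.log (x+1)) ^ γ0)) 1
        ≤ cm * x ^ m + x ^ (b*q) + 1 := by
      apply max_le (max_le ?_ ?_) (by linarith)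
      · rcases hγ0.lt_or_gt with hneg | hpos
        · have hmeq : m = -γ0 := by rw [hmdef]; exact max_eq_left (by linarith)
          have heq : (1/(x+1)) ^ γ0 = (x+1) ^ (-γ0) := by
            rw [one_div, Real.inv_rpow hx10.le, ← Real.rpow_neg hx10.le]
          rw [heq]
          have hc : (x+1) ^ (-γ0) ≤ (2*x) ^ (-γ0) :=
            Real.rpow_le_rpow hx10.le (by linarith) (by linarith)
          have hd : ((2:ℝ)*x) ^ (-γ0) = 2 ^ (-γ0) * x ^ (-γ0) :=
            Real.mul_rpow (by norm_num) hx0.le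
          have hee : (2:ℝ) ^ (-γ0) * x ^ (-γ0) = cm * x ^ m := by rw [hcmdef, hmeq]
          linarith [hxbq0]
        · have hle1 : (1/(x+1)) ^ γ0 ≤ 1 :=
            Real.rpow_le_one (by positivity) (by rw [div_le_one hx10]; linarith) hpos.le
          linarith
      · rcases hγ0.lt_or_gt with hneg | hpos
        · have := Real.rpow_le_one_of_one_le_of_nonpos hlogge1 hneg.le
          linarith
        · have hc : (Real.log (x+1)) ^ γ0 ≤ (x ^ b) ^ γ0 :=
            Real.rpow_le_rpow hlog1 hL1 hpos.le
          have hd : (x ^ b) ^ γ0 = x ^ (b*γ0) := (Real.rpow_mul hx0.le b γ0).symm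
          have hee : x ^ (b*γ0) = x ^ (b*q) := by rw [hqdef, max_eq_left hpos.le]
          linarith
    have hstep : C' * x ^ δ / Real.sqrt x = C' * x ^ (δ - 1/2) := by
      rw [Real.sqrt_eq_rpow, mul_div_assoc, ← Real.rpow_sub hx0]
    have hsum : Real.log (x+1) + max (max ((1/(x+1)) ^ γ0) ((Real.log (x+1)) ^ γ0)) 1
        ≤ x ^ b + (cm * x ^ m + x ^ (b*q) + 1) := add_le_add hL1 hMle
    calc C' * x ^ δ / Real.sqrt x *
          (Real.log (x+1) + max (max ((1/(x+1)) ^ γ0) ((Real.log (x+1)) ^ γ0)) 1)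
        = C' * x ^ (δ - 1/2) *
          (Real.log (x+1) + max (max ((1/(x+1)) ^ γ0) ((Real.log (x+1)) ^ γ0)) 1) := by
          rw [hstep]
      _ ≤ C' * x ^ (δ - 1/2) * (x ^ b + (cm * x ^ m + x ^ (b*q) + 1)) := by
          apply mul_le_mul_of_nonneg_left hsum
          positivity
      _ = C' * (x ^ (δ-1/2+b) + cm * x ^ (δ-1/2+m) + x ^ (δ-1/2+b*q) + x ^ (δ-1/2)) := by
          rw [Real.rpow_add hx0 (δ-1/2) b, Real.rpow_add hx0 (δ-1/2) m,
            Real.rpow_add hx0 (δ-1/2) (b*q)]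
          ring

/-- **Deterministic uniform approximation at the true quantile function** (Lemma 2):
uniformly for `s ∈ [1/(k_n+1), k_n/(k_n+1)]` and `h ∈ H_n`,
`(-log s)⁻¹ (1 + (γ₀ + h₁/√k_n)(Q_{γ₀}(s) - h₂/√k_n)/(1 + h₃/√k_n))^{-1/(γ₀+h₁/√k_n)} = 1 + o(1)`. -/
theorem deterministic_uniform_approximation
    (γ₀ : ℝ) (hγ : -(1/2) < γ₀) (hγ0 : γ₀ ≠ 0)
    (k : ℕ → ℕ) (hk : Tendsto k atTop atTop)
    (r : ℕ → ℝ) (hr : Tendsto r atTop atTop)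
    (hrO : ∃ δ C : ℝ, 0 < δ ∧ δ < min (1/2) (γ₀ + 1/2) ∧
      ∀ n, |r n| ≤ C * (k n : ℝ) ^ δ) :
    ∀ ε > (0:ℝ), ∃ N : ℕ, ∀ n ≥ N,
      ∀ s ∈ Set.Icc (1 / ((k n : ℝ) + 1)) ((k n : ℝ) / ((k n : ℝ) + 1)),
      ∀ h ∈ Metric.closedBall (0 : Fin 3 → ℝ) (r n),
        |(-Real.log s)⁻¹ *
          (1 + (γ₀ + h 0 / Real.sqrt (k n : ℝ)) *
            ((Qgev γ₀ s - h 1 / Real.sqrt (k n : ℝ)) /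
              (1 + h 2 / Real.sqrt (k n : ℝ))))
            ^ (-1 / (γ₀ + h 0 / Real.sqrt (k n : ℝ))) - 1| ≤ ε := by

  intro ε hε
  obtain ⟨δ, C, hδ0, hδm, hC⟩ := hrO
  have hδ1 : δ < 1/2 := lt_of_lt_of_le hδm (min_le_left _ _)
  have hδ2 : δ < γ₀ + 1/2 := lt_of_lt_of_le hδm (min_le_right _ _)
  have hγpos : 0 < |γ₀| := abs_pos.mpr hγ0
  obtain ⟨C', hC'def⟩ : ∃ C':ℝ, C' = max C 1 := ⟨_, rfl⟩
  have hC'1 : (1:ℝ) ≤ C' := hC'def ▸ le_max_right _ _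
  have hC'0 : (0:ℝ) ≤ C' := by linarith
  obtain ⟨C1, hC1def⟩ : ∃ C1:ℝ, C1 = 6 + 4/|γ₀| + 2*|γ₀| := ⟨_, rfl⟩
  obtain ⟨C2, hC2def⟩ : ∃ C2:ℝ, C2 = (2 + 4*C1)/|γ₀| := ⟨_, rfl⟩
  have hC1pos : 0 < C1 := by rw [hC1def]; positivity
  have hC2pos : 0 < C2 := by
    rw [hC2def]; exact div_pos (by positivity) hγpos
  obtain ⟨η, hηdef⟩ : ∃ η:ℝ,
      η = min (min (1/2) (|γ₀|/2)) (min (1/(2*C1)) (min (1/C2) (ε/(2*C2)))) := ⟨_, rfl⟩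
  have hη : 0 < η := by
    rw [hηdef]
    exact lt_min (lt_min one_half_pos (half_pos hγpos))
      (lt_min (by positivity) (lt_min (by positivity) (by positivity)))
  have hηa : η ≤ 1/2 := hηdef ▸ ((min_le_left _ _).trans (min_le_left _ _))
  have hηb : η ≤ |γ₀|/2 := hηdef ▸ ((min_le_left _ _).trans (min_le_right _ _))
  have hηc : η ≤ 1/(2*C1) := hηdef ▸ ((min_le_right _ _).trans (min_le_left _ _))
  have hηd : η ≤ 1/C2 :=
    hηdef ▸ ((min_le_right _ _).trans ((min_le_right _ _).trans (min_le_left _ _)))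
  have hηe : η ≤ ε/(2*C2) :=
    hηdef ▸ ((min_le_right _ _).trans ((min_le_right _ _).trans (min_le_right _ _)))
  have hk' : Tendsto (fun n => ((k n : ℕ):ℝ)) atTop atTop :=
    tendsto_natCast_atTop_atTop.comp hk
  have hPlim : Tendsto (fun n => (C' * ((k n : ℝ)) ^ δ / Real.sqrt ((k n : ℝ))) *
      (Real.log ((k n : ℝ)+1) +
        max (max ((1/((k n : ℝ)+1)) ^ γ₀) ((Real.log ((k n : ℝ)+1)) ^ γ₀)) 1))
      atTop (𝓝 0) :=
    (tendstoP γ₀ hγ0 C' δ hC'0 hδ0 hδ1 hδ2).comp hk'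
  have hev := (hPlim.eventually (gt_mem_nhds hη)).and (hk.eventually (eventually_ge_atTop 1))
  obtain ⟨N, hN⟩ := eventually_atTop.mp hev
  refine ⟨N, fun n hn s hs h hh => ?_⟩
  obtain ⟨hPn0, hkn1⟩ := hN n hn
  have hx1 : (1:ℝ) ≤ (k n : ℝ) := by exact_mod_cast hkn1
  have hx0 : (0:ℝ) < (k n : ℝ) := by linarith
  have hx10 : (0:ℝ) < (k n : ℝ) + 1 := by linarith
  have hsqrt : (0:ℝ) < Real.sqrt (k n : ℝ) := Real.sqrt_pos.mpr hx0
  obtain ⟨e, hedef⟩ : ∃ e:ℝ, e = C' * ((k n : ℝ)) ^ δ / Real.sqrt ((k n : ℝ)) := ⟨_, rfl⟩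
  obtain ⟨M, hMdef⟩ : ∃ M:ℝ,
      M = max (max ((1/((k n : ℝ)+1)) ^ γ₀) ((Real.log ((k n : ℝ)+1)) ^ γ₀)) 1 := ⟨_, rfl⟩
  have hPn : e * (Real.log ((k n : ℝ)+1) + M) < η := by
    rw [hedef, hMdef]; exact hPn0
  have he0 : (0:ℝ) ≤ e := by rw [hedef]; positivity
  have hlogx : (0:ℝ) ≤ Real.log ((k n : ℝ)+1) := Real.log_nonneg (by linarith)
  have hM1 : (1:ℝ) ≤ M := hMdef ▸ le_max_right _ _
  have heη : e ≤ η := by nlinarith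
  have heM : e * M ≤ η := by nlinarith
  -- s and t facts
  have hs0 : 0 < s := lt_of_lt_of_le (by positivity) hs.1
  have hslt1 : s < 1 := lt_of_le_of_lt hs.2 (by rw [div_lt_one hx10]; linarith)
  have ht0 : 0 < -Real.log s := neg_pos.mpr (Real.log_neg hs0 hslt1)
  have htub : -Real.log s ≤ Real.log ((k n : ℝ)+1) := by
    have h1 : Real.log (1/((k n : ℝ)+1)) ≤ Real.log s := Real.log_le_log (by positivity) hs.1
    rw [one_div, Real.log_inv] at h1
    linarith
  have htlb : 1/((k n : ℝ)+1) ≤ -Real.log s := by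
    have h1 : Real.log s ≤ Real.log ((k n : ℝ)/((k n : ℝ)+1)) := Real.log_le_log hs0 hs.2
    have h2 : Real.log ((k n : ℝ)/((k n : ℝ)+1)) ≤ (k n : ℝ)/((k n : ℝ)+1) - 1 :=
      Real.log_le_sub_one_of_pos (by positivity)
    have h3 : (k n : ℝ)/((k n : ℝ)+1) - 1 = -(1/((k n : ℝ)+1)) := by field_simp; ring
    linarith
  have hlogt : |Real.log (-Real.log s)| ≤ Real.log ((k n : ℝ)+1) := by
    rw [abs_le]
    constructor
    · have h1 : Real.log (1/((k n : ℝ)+1)) ≤ Real.log (-Real.log s) :=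
        Real.log_le_log (by positivity) htlb
      rw [one_div, Real.log_inv] at h1
      linarith
    · exact Real.log_le_log ht0 (le_trans htub (Real.log_le_self hx10.le))
  have hMt : (-Real.log s) ^ γ₀ ≤ M := by
    rcases hγ0.lt_or_gt with hneg | hpos
    · have h1 : (-Real.log s) ^ γ₀ ≤ (1/((k n : ℝ)+1)) ^ γ₀ :=
        Real.rpow_le_rpow_of_nonpos (by positivity) htlb hneg.le
      exact h1.trans (hMdef ▸ ((le_max_left _ _).trans (le_max_left _ _)))
    · have h1 : (-Real.log s) ^ γ₀ ≤ (Real.log ((k n : ℝ)+1)) ^ γ₀ :=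
        Real.rpow_le_rpow ht0.le htub hpos.le
      exact h1.trans (hMdef ▸ ((le_max_right _ _).trans (le_max_left _ _)))
  -- coordinates of h
  have hnorm : ‖h‖ ≤ r n := by
    rw [Metric.mem_closedBall, dist_zero_right] at hh
    exact hh
  have hhc : ∀ i, |h i| ≤ C' * ((k n : ℝ)) ^ δ := by
    intro i
    calc |h i| = ‖h i‖ := (Real.norm_eq_abs _).symm
    _ ≤ ‖h‖ := norm_le_pi_norm h i
    _ ≤ r n := hnorm
    _ ≤ |r n| := le_abs_self _
    _ ≤ C * ((k n : ℝ)) ^ δ := hC n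
    _ ≤ C' * ((k n : ℝ)) ^ δ := by
        apply mul_le_mul_of_nonneg_right _ (Real.rpow_nonneg hx0.le δ)
        rw [hC'def]; exact le_max_left C 1
  have hucoord : ∀ i, |h i / Real.sqrt (k n : ℝ)| ≤ e := by
    intro i
    rw [abs_div, abs_of_nonneg (Real.sqrt_nonneg _), hedef]
    exact div_le_div_of_nonneg_right (hhc i) hsqrt.le
  -- smallness conditions
  have he2 : e ≤ 1/2 := heη.trans hηa
  have heγ : e ≤ |γ₀|/2 := heη.trans hηb
  have hS1 : C1 * (e * M) ≤ 1/2 := by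
    have h1 : e * M ≤ 1/(2*C1) := heM.trans hηc
    have h2 := mul_le_mul_of_nonneg_left h1 hC1pos.le
    have h3 : C1 * (1/(2*C1)) = 1/2 := by field_simp
    linarith
  have hLM : e * (|Real.log (-Real.log s)| + M) ≤ η := by
    have h1 : e * (|Real.log (-Real.log s)| + M) ≤ e * (Real.log ((k n : ℝ)+1) + M) := by
      apply mul_le_mul_of_nonneg_left _ he0
      linarith
    linarith
  have hS2 : C2 * (e * (|Real.log (-Real.log s)| + M)) ≤ 1 := by
    have h2 := mul_le_mul_of_nonneg_left (hLM.trans hηd) hC2pos.le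
    have h3 : C2 * (1/C2) = 1 := by field_simp
    linarith
  have hS1' : (6 + 4/|γ₀| + 2*|γ₀|) * (e * M) ≤ 1/2 := by rw [← hC1def]; exact hS1
  have hS2' : ((2 + 4*(6 + 4/|γ₀| + 2*|γ₀|))/|γ₀|) *
      (e * (|Real.log (-Real.log s)| + M)) ≤ 1 := by
    rw [← hC1def, ← hC2def]; exact hS2
  have hkey := key_est γ₀ (h 0 / Real.sqrt (k n : ℝ)) (h 1 / Real.sqrt (k n : ℝ))
    (h 2 / Real.sqrt (k n : ℝ)) (-Real.log s) M e hγ0 ht0 hM1 hMt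
    (hucoord 0) (hucoord 1) (hucoord 2) he2 heγ hS1' hS2'
  have hQ : Qgev γ₀ s = ((-Real.log s) ^ (-γ₀) - 1)/γ₀ := by rw [Qgev, if_neg hγ0]
  rw [hQ]
  refine hkey.trans ?_
  rw [← hC1def, ← hC2def]
  have h1 : e * (|Real.log (-Real.log s)| + M) ≤ ε/(2*C2) := hLM.trans hηe
  have h2 := mul_le_mul_of_nonneg_left h1 hC2pos.le
  have h3 : C2 * (ε/(2*C2)) = ε/2 := by field_simp
  linarith

end BMMLE
end
end

section
/- The GEV score is centered: for γ0 > −1/2, γ0 ≠ 0 and θ0 = (γ0, 0, 1), the vector-valued integral ∫_0^1 (∂ℓ/∂θ)(θ0, Q_{γ0}(s)) ds equals the zero vector in ℝ³; that is, each of the three partial derivatives of ℓ with respect to γ, μ and σ, evaluated at θ0 along the quantile curve s ↦ Q_{γ0}(s), is integrable on (0,1) and integrates to 0. -/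
open MeasureTheory ProbabilityTheory Filter Real Topology Matrix Set

noncomputable section

namespace BMMLE


-- ===================== auxiliary lemmas =====================

variable {γ t : ℝ}

lemma rpow_fact1 (ht : 0 < t) : t ^ (-γ) = (t ^ γ)⁻¹ := by
  rw [Real.rpow_neg ht.le]

lemma rpow_fact2 (ht : 0 < t) : t ^ (γ + 1) = t ^ γ * t := by
  rw [Real.rpow_add ht, Real.rpow_one]

lemma score_mu_eq (hγ0 : γ ≠ 0) (ht : 0 < t) :
    score 1 (θ₀ γ) ((t ^ (-γ) - 1) / γ) = (γ + 1) * t ^ γ - t ^ (γ + 1) := by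
  set x : ℝ := (t ^ (-γ) - 1) / γ with hx
  have hu : 1 + γ * x = t ^ (-γ) := by rw [hx, mul_div_cancel₀ _ hγ0]; ring
  have hupos : (0:ℝ) < t ^ (-γ) := Real.rpow_pos_of_pos ht _
  have hfun : (fun m => ll (Function.update (θ₀ γ) 1 m) x)
      = fun m => -(1 + 1/γ) * Real.log (1 + γ * (x - m)) - (1 + γ * (x - m)) ^ (-1/γ) := by
    funext m; simp [ll, θ₀, Function.update, hγ0]
  have h0 : HasDerivAt (fun m : ℝ => 1 + γ * (x - m)) (-γ) 0 := by
    simpa using (((hasDerivAt_id (0:ℝ)).const_sub x).const_mul γ).const_add 1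
  have hval : 1 + γ * (x - 0) = t ^ (-γ) := by simpa using hu
  have h2 : HasDerivAt (fun m => Real.log (1 + γ * (x - m))) (-γ / (t ^ (-γ))) 0 := by
    have := h0.log (by rw [hval]; exact ne_of_gt hupos)
    rwa [hval] at this
  have h3 : HasDerivAt (fun m => (1 + γ * (x - m)) ^ (-1/γ))
      (-γ * (-1/γ) * (t ^ (-γ)) ^ (-1/γ - 1)) 0 := by
    have := h0.rpow_const (p := -1/γ) (Or.inl (by rw [hval]; exact ne_of_gt hupos))
    rwa [hval] at this
  have htot := (h2.const_mul (-(1 + 1/γ))).sub h3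
  have hder : score 1 (θ₀ γ) x
      = -(1 + 1/γ) * (-γ / t ^ (-γ)) - -γ * (-1/γ) * (t ^ (-γ)) ^ (-1/γ - 1) := by
    show deriv (fun m => ll (Function.update (θ₀ γ) 1 m) x) (θ₀ γ 1) = _
    have h5 : θ₀ γ 1 = 0 := rfl
    rw [h5, hfun]; exact htot.deriv
  rw [hder]
  have e1 : (t ^ (-γ) : ℝ)⁻¹ = t ^ γ := by
    rw [← Real.rpow_neg ht.le, neg_neg]
  have e2 : ((t ^ (-γ) : ℝ)) ^ (-1/γ - 1) = t ^ (γ + 1) := by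
    rw [← Real.rpow_mul ht.le]
    congr 1; field_simp; ring
  have e1' : -γ / t ^ (-γ) = -γ * t ^ γ := by rw [div_eq_mul_inv, e1]
  rw [e2, e1']
  field_simp

lemma score_sigma_eq (hγ0 : γ ≠ 0) (ht : 0 < t) :
    score 2 (θ₀ γ) ((t ^ (-γ) - 1) / γ)
      = ((γ + 1) * (1 - t ^ γ) - (t - t ^ (γ + 1))) / γ - 1 := by
  set x : ℝ := (t ^ (-γ) - 1) / γ with hx
  have hu : 1 + γ * x = t ^ (-γ) := by rw [hx, mul_div_cancel₀ _ hγ0]; ring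
  have hupos : (0:ℝ) < t ^ (-γ) := Real.rpow_pos_of_pos ht _
  have hfun : (fun m => ll (Function.update (θ₀ γ) 2 m) x)
      = fun m => -(1 + 1/γ) * Real.log (1 + γ * (x / m)) - (1 + γ * (x / m)) ^ (-1/γ)
          - Real.log m := by
    funext m; simp [ll, θ₀, Function.update, hγ0]
  have hdivd : HasDerivAt (fun m : ℝ => x / m) (-x) 1 := by
    have h := (hasDerivAt_inv (one_ne_zero : (1:ℝ) ≠ 0)).const_mul x
    have hfe : (fun m : ℝ => x * m⁻¹) = fun m : ℝ => x / m := by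
      funext m; rw [div_eq_mul_inv]
    rw [hfe] at h
    simpa using h
  have h0 : HasDerivAt (fun m : ℝ => 1 + γ * (x / m)) (γ * (-x)) 1 :=
    (hdivd.const_mul γ).const_add 1
  have hval : 1 + γ * (x / 1) = t ^ (-γ) := by rw [div_one]; exact hu
  have h2 : HasDerivAt (fun m => Real.log (1 + γ * (x / m))) (γ * (-x) / (t ^ (-γ))) 1 := by
    have := h0.log (by rw [hval]; exact ne_of_gt hupos)
    rwa [hval] at this
  have h3 : HasDerivAt (fun m => (1 + γ * (x / m)) ^ (-1/γ))
      (γ * (-x) * (-1/γ) * (t ^ (-γ)) ^ (-1/γ - 1)) 1 := by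
    have := h0.rpow_const (p := -1/γ) (Or.inl (by rw [hval]; exact ne_of_gt hupos))
    rwa [hval] at this
  have hlog1 : HasDerivAt (fun m : ℝ => Real.log m) 1 1 := by
    simpa using Real.hasDerivAt_log (one_ne_zero : (1:ℝ) ≠ 0)
  have htot := ((h2.const_mul (-(1 + 1/γ))).sub h3).sub hlog1
  have hder : score 2 (θ₀ γ) x
      = -(1 + 1/γ) * (γ * (-x) / t ^ (-γ)) - γ * (-x) * (-1/γ) * (t ^ (-γ)) ^ (-1/γ - 1)
        - 1 := by
    show deriv (fun m => ll (Function.update (θ₀ γ) 2 m) x) (θ₀ γ 2) = _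
    have h5 : θ₀ γ 2 = 1 := rfl
    rw [h5, hfun]; exact htot.deriv
  have e2 : ((t ^ (-γ) : ℝ)) ^ (-1/γ - 1) = t ^ (γ + 1) := by
    rw [← Real.rpow_mul ht.le]
    congr 1; field_simp; ring
  rw [hder, e2, hx, rpow_fact1 ht, rpow_fact2 ht]
  have hA : t ^ γ ≠ 0 := ne_of_gt (Real.rpow_pos_of_pos ht _)
  field_simp

lemma score_gamma_eq (hγ0 : γ ≠ 0) (ht : 0 < t) :
    score 0 (θ₀ γ) ((t ^ (-γ) - 1) / γ)
      = ((t - 1) * Real.log t) / γ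
        + (t - (1 + γ) + (1 + γ) * t ^ γ - t ^ (γ + 1)) / γ ^ 2 := by
  set x : ℝ := (t ^ (-γ) - 1) / γ with hx
  have hu : 1 + γ * x = t ^ (-γ) := by rw [hx, mul_div_cancel₀ _ hγ0]; ring
  have hupos : (0:ℝ) < t ^ (-γ) := Real.rpow_pos_of_pos ht _
  have hev : (fun m => ll (Function.update (θ₀ γ) 0 m) x) =ᶠ[𝓝 γ]
      (fun m => -(1 + 1/m) * Real.log (1 + m * x) - (1 + m * x) ^ (-1/m)) := by
    filter_upwards [eventually_ne_nhds hγ0] with m hm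
    simp [ll, θ₀, Function.update, hm]
  have hv : HasDerivAt (fun m : ℝ => 1 + m * x) x γ := by
    simpa using ((hasDerivAt_id γ).mul_const x).const_add 1
  have hval : 1 + γ * x = t ^ (-γ) := hu
  have hlog : HasDerivAt (fun m => Real.log (1 + m * x)) (x / t ^ (-γ)) γ := by
    have := hv.log (by rw [hval]; exact ne_of_gt hupos)
    rwa [hval] at this
  have hinv : HasDerivAt (fun m : ℝ => -1/m) ((γ ^ 2)⁻¹) γ := by
    have h : HasDerivAt (fun m : ℝ => -m⁻¹) _ γ := (hasDerivAt_inv hγ0).neg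
    have hfe : (fun m : ℝ => -m⁻¹) = fun m : ℝ => -1/m := by
      funext m; rw [neg_div, one_div]
    rw [hfe] at h
    simpa using h
  have hone : HasDerivAt (fun m : ℝ => -(1 + 1/m)) ((γ ^ 2)⁻¹) γ := by
    have h : HasDerivAt (fun m : ℝ => -(1 + m⁻¹)) _ γ := ((hasDerivAt_inv hγ0).const_add 1).neg
    have hfe : (fun m : ℝ => -(1 + m⁻¹)) = fun m : ℝ => -(1 + 1/m) := by
      funext m; rw [one_div]
    rw [hfe] at h
    simpa using h
  have hpow : HasDerivAt (fun m => (1 + m * x) ^ (-1/(m:ℝ)))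
      (x * (-1/γ) * (t ^ (-γ)) ^ (-1/γ - 1)
        + (γ ^ 2)⁻¹ * (t ^ (-γ)) ^ (-1/γ) * Real.log (t ^ (-γ))) γ := by
    have := hv.rpow hinv (by rw [hval]; exact hupos)
    rwa [hval] at this
  have hmul := hone.mul hlog
  have htot := hmul.sub hpow
  have hder : score 0 (θ₀ γ) x
      = ((γ ^ 2)⁻¹ * Real.log (t ^ (-γ)) + -(1 + 1/γ) * (x / t ^ (-γ)))
        - (x * (-1/γ) * (t ^ (-γ)) ^ (-1/γ - 1)
        + (γ ^ 2)⁻¹ * (t ^ (-γ)) ^ (-1/γ) * Real.log (t ^ (-γ))) := by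
    show deriv (fun m => ll (Function.update (θ₀ γ) 0 m) x) (θ₀ γ 0) = _
    have h5 : θ₀ γ 0 = γ := rfl
    rw [h5, hev.deriv_eq]; have := htot.deriv; rw [hu] at this; exact this
  have e2 : ((t ^ (-γ) : ℝ)) ^ (-1/γ - 1) = t ^ (γ + 1) := by
    rw [← Real.rpow_mul ht.le]
    congr 1; field_simp; ring
  have e3 : ((t ^ (-γ) : ℝ)) ^ (-1/γ) = t := by
    rw [← Real.rpow_mul ht.le]
    rw [show -γ * (-1/γ) = 1 by field_simp]
    exact Real.rpow_one t
  have e4 : Real.log (t ^ (-γ)) = -γ * Real.log t := Real.log_rpow ht _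
  rw [hder, e2, e3, e4, hx, rpow_fact1 ht, rpow_fact2 ht]
  have hA : t ^ γ ≠ 0 := ne_of_gt (Real.rpow_pos_of_pos ht _)
  field_simp
  ring

-- ============ change of variables s = exp(-t) ============

lemma exp_neg_image : (fun t : ℝ => Real.exp (-t)) '' (Ioi 0) = Ioo (0:ℝ) 1 := by
  ext y
  constructor
  · rintro ⟨u, hu, rfl⟩
    exact ⟨Real.exp_pos _, Real.exp_lt_one_iff.mpr (neg_neg_iff_pos.mpr hu)⟩
  · rintro ⟨h1, h2⟩
    exact ⟨-Real.log y, by simpa using Real.log_neg h1 h2, by simp [Real.exp_log h1]⟩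

lemma exp_neg_hasDeriv : ∀ u ∈ Ioi (0:ℝ),
    HasDerivWithinAt (fun t : ℝ => Real.exp (-t)) (-Real.exp (-u)) (Ioi 0) u := by
  intro u _
  have h : HasDerivAt (fun t : ℝ => Real.exp (-t)) (Real.exp (-u) * (-1)) u :=
    (hasDerivAt_neg u).exp
  simpa [mul_comm] using h.hasDerivWithinAt

lemma exp_neg_injOn : InjOn (fun t : ℝ => Real.exp (-t)) (Ioi 0) :=
  fun a _ b _ h => by
    have := Real.exp_injective h
    linarith [neg_injective this]

lemma cov_integrable (f : ℝ → ℝ) :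
    IntegrableOn (fun s => f (-Real.log s)) (Ioo (0:ℝ) 1) volume ↔
    IntegrableOn (fun t => Real.exp (-t) * f t) (Ioi (0:ℝ)) volume := by
  rw [← exp_neg_image,
    integrableOn_image_iff_integrableOn_abs_deriv_smul measurableSet_Ioi
      exp_neg_hasDeriv exp_neg_injOn]
  apply integrableOn_congr_fun _ measurableSet_Ioi
  intro t _
  simp [abs_of_pos (Real.exp_pos (-t)), Real.log_exp]

lemma cov_integral (f : ℝ → ℝ) :
    ∫ s in Ioo (0:ℝ) 1, f (-Real.log s) = ∫ t in Ioi (0:ℝ), Real.exp (-t) * f t := by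
  rw [← exp_neg_image,
    integral_image_eq_integral_abs_deriv_smul measurableSet_Ioi
      exp_neg_hasDeriv exp_neg_injOn]
  apply setIntegral_congr_fun measurableSet_Ioi
  intro t _
  simp [abs_of_pos (Real.exp_pos (-t)), Real.log_exp]

-- ============ Gamma-type integrals ============

lemma int_rpow {a : ℝ} (ha : -1 < a) :
    IntegrableOn (fun t : ℝ => Real.exp (-t) * t ^ a) (Ioi (0:ℝ)) volume := by
  have := Real.GammaIntegral_convergent (show 0 < a + 1 by linarith)
  simpa using this

lemma int_rpow_val {a : ℝ} (ha : -1 < a) :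
    ∫ t in Ioi (0:ℝ), Real.exp (-t) * t ^ a = Real.Gamma (a + 1) := by
  rw [Real.Gamma_eq_integral (show 0 < a + 1 by linarith)]
  simp

lemma abs_log_le (ht : 0 < t) :
    |Real.log t| ≤ t + 2 * t ^ (-(1/2) : ℝ) := by
  have hpos : (0:ℝ) < t ^ (-(1/2) : ℝ) := Real.rpow_pos_of_pos ht _
  rcases le_or_gt 1 t with h | h
  · rw [abs_of_nonneg (Real.log_nonneg h)]
    have := Real.log_le_sub_one_of_pos ht
    linarith
  · rw [abs_of_nonpos (Real.log_nonpos ht.le h.le)]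
    have h1 : Real.log (t ^ (-(1/2) : ℝ)) = -(1/2) * Real.log t := Real.log_rpow ht _
    have h2 := Real.log_le_sub_one_of_pos hpos
    nlinarith

lemma tlog_integrable :
    IntegrableOn (fun t : ℝ => Real.exp (-t) * ((t - 1) * Real.log t)) (Ioi (0:ℝ)) volume := by
  have hg : IntegrableOn
      (fun t : ℝ => Real.exp (-t) * ((t + 1) * (t + 2 * t ^ (-(1/2) : ℝ)))) (Ioi 0) volume := by
    have h := (((int_rpow (by norm_num : (-1:ℝ) < 2)).add
        ((int_rpow (by norm_num : (-1:ℝ) < 1/2)).const_mul 2)).add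
        (int_rpow (by norm_num : (-1:ℝ) < 1))).add
        ((int_rpow (by norm_num : (-1:ℝ) < -(1/2))).const_mul 2)
    apply IntegrableOn.congr_fun h _ measurableSet_Ioi
    intro t ht
    have ht : (0:ℝ) < t := ht
    have e1 : t ^ (2:ℝ) = t * t := by
      rw [show (2:ℝ) = (1:ℝ) + 1 by norm_num, Real.rpow_add ht, Real.rpow_one]
    have e2 : t * t ^ (-(1/2):ℝ) = t ^ (1/2:ℝ) := by
      rw [show t * t ^ (-(1/2):ℝ) = t ^ (1:ℝ) * t ^ (-(1/2):ℝ) by rw [Real.rpow_one],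
        ← Real.rpow_add ht]
      norm_num
    simp only [Pi.add_apply, Real.rpow_one]
    rw [e1, ← e2]
    ring
  apply hg.mono' (Measurable.aestronglyMeasurable
    (show Measurable fun t : ℝ => Real.exp (-t) * ((t - 1) * Real.log t) from
      (Real.measurable_exp.comp measurable_neg).mul
      ((measurable_id.sub measurable_const).mul Real.measurable_log)))
  rw [ae_restrict_iff' measurableSet_Ioi]
  filter_upwards with t ht
  have ht : (0:ℝ) < t := ht
  have h1 : |t - 1| ≤ t + 1 := abs_le.mpr ⟨by linarith, by linarith⟩
  have h2 := abs_log_le ht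
  have hpos : (0:ℝ) < t ^ (-(1/2) : ℝ) := Real.rpow_pos_of_pos ht _
  have hE : (0:ℝ) < Real.exp (-t) := Real.exp_pos _
  rw [Real.norm_eq_abs, abs_mul, abs_mul, abs_of_pos hE]
  have hmm : |t - 1| * |Real.log t| ≤ (t + 1) * (t + 2 * t ^ (-(1/2) : ℝ)) :=
    mul_le_mul h1 h2 (abs_nonneg _) (by linarith)
  exact mul_le_mul_of_nonneg_left hmm hE.le

/-- Antiderivative for the `(t-1) log t e^{-t}` integral. -/
def FF (t : ℝ) : ℝ := -(t * Real.exp (-t) * Real.log t) - Real.exp (-t)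

lemma tlog_integral :
    ∫ t in Ioi (0:ℝ), Real.exp (-t) * ((t - 1) * Real.log t) = 1 := by
  have hcont : ContinuousWithinAt FF (Ici 0) 0 := by
    rw [← Set.Ioi_insert, continuousWithinAt_insert_self]
    have h1 : Tendsto (fun t : ℝ => Real.log t * t) (𝓝[>] (0:ℝ)) (𝓝 0) := by
      simpa using tendsto_log_mul_rpow_nhdsGT_zero one_pos
    have h2 : Tendsto (fun t : ℝ => Real.exp (-t)) (𝓝[>] (0:ℝ)) (𝓝 1) := by
      have : Tendsto (fun t : ℝ => Real.exp (-t)) (𝓝 (0:ℝ)) (𝓝 (Real.exp (-0))) :=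
        (Real.continuous_exp.comp continuous_neg).tendsto 0
      simpa using this.mono_left nhdsWithin_le_nhds
    have h3 : Tendsto FF (𝓝[>] (0:ℝ)) (𝓝 (-(0*1) - 1)) :=
      ((h1.mul h2).neg.sub h2).congr (fun t => by unfold FF; ring)
    unfold ContinuousWithinAt
    have hval : FF 0 = -1 := by simp [FF]
    rw [hval]
    simpa using h3
  have hderiv : ∀ t ∈ Ioi (0:ℝ), HasDerivAt FF (Real.exp (-t) * ((t - 1) * Real.log t)) t := by
    intro t ht
    have ht : (0:ℝ) < t := ht
    have hexp : HasDerivAt (fun t : ℝ => Real.exp (-t)) (Real.exp (-t) * (-1)) t :=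
      (hasDerivAt_neg t).exp
    have hte : HasDerivAt (fun t : ℝ => t * Real.exp (-t))
        (1 * Real.exp (-t) + t * (Real.exp (-t) * (-1))) t := (hasDerivAt_id t).mul hexp
    have hlog : HasDerivAt Real.log t⁻¹ t := Real.hasDerivAt_log (ne_of_gt ht)
    have h := ((hte.mul hlog).neg.sub hexp)
    refine h.congr_deriv ?_
    field_simp
    ring
  have htend : Tendsto FF atTop (𝓝 0) := by
    have h2 : Tendsto (fun t : ℝ => Real.exp (-t)) atTop (𝓝 0) := by
      simpa using Real.tendsto_exp_neg_atTop_nhds_zero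
    have h1 : Tendsto (fun t : ℝ => t * Real.exp (-t) * Real.log t) atTop (𝓝 0) := by
      have hub : Tendsto (fun t : ℝ => t ^ 2 * Real.exp (-t)) atTop (𝓝 0) :=
        tendsto_pow_mul_exp_neg_atTop_nhds_zero 2
      apply tendsto_of_tendsto_of_tendsto_of_le_of_le' tendsto_const_nhds hub
      · filter_upwards [eventually_ge_atTop (1:ℝ)] with t ht
        have h0 : (0:ℝ) < t := by linarith
        exact mul_nonneg (mul_nonneg h0.le (Real.exp_pos _).le) (Real.log_nonneg ht)
      · filter_upwards [eventually_ge_atTop (1:ℝ)] with t ht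
        have h0 : (0:ℝ) < t := by linarith
        have hlt : Real.log t ≤ t := by
          have := Real.log_le_sub_one_of_pos h0; linarith
        have hE : (0:ℝ) < Real.exp (-t) := Real.exp_pos _
        nlinarith [mul_nonneg (mul_nonneg h0.le hE.le) (sub_nonneg.mpr hlt)]
    have h3 : Tendsto FF atTop (𝓝 (-0 - 0)) :=
      (h1.neg.sub h2).congr (fun t => rfl)
    simpa using h3
  have := integral_Ioi_of_hasDerivAt_of_tendsto hcont hderiv tlog_integrable htend
  rw [this]
  simp [FF]

-- ============ combination integrals ============

lemma combo_integrable (hγ : (-1:ℝ) < γ) (a0 a1 a2 a3 : ℝ) :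
    IntegrableOn (fun t : ℝ =>
      Real.exp (-t) * (a0 + a1 * t + a2 * t ^ γ + a3 * t ^ (γ + 1))) (Ioi (0:ℝ)) volume := by
  have h := ((((int_rpow (by norm_num : (-1:ℝ) < 0)).const_mul a0).add
      ((int_rpow (by norm_num : (-1:ℝ) < 1)).const_mul a1)).add
      ((int_rpow hγ).const_mul a2)).add
      ((int_rpow (by linarith : (-1:ℝ) < γ + 1)).const_mul a3)
  apply IntegrableOn.congr_fun h _ measurableSet_Ioi
  intro t ht
  simp only [Pi.add_apply, Real.rpow_zero, Real.rpow_one]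
  ring

lemma combo_integral (hγ : (-1:ℝ) < γ) (a0 a1 a2 a3 : ℝ) :
    ∫ t in Ioi (0:ℝ), Real.exp (-t) * (a0 + a1 * t + a2 * t ^ γ + a3 * t ^ (γ + 1))
      = a0 + a1 + a2 * Real.Gamma (γ + 1) + a3 * ((γ + 1) * Real.Gamma (γ + 1)) := by
  have hfun : EqOn (fun t : ℝ =>
      Real.exp (-t) * (a0 + a1 * t + a2 * t ^ γ + a3 * t ^ (γ + 1)))
      (fun t : ℝ => a0 * (Real.exp (-t) * t ^ (0:ℝ)) + a1 * (Real.exp (-t) * t ^ (1:ℝ))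
        + a2 * (Real.exp (-t) * t ^ γ) + a3 * (Real.exp (-t) * t ^ (γ + 1)))
      (Ioi 0) := by
    intro t _
    simp only [Real.rpow_zero, Real.rpow_one]
    ring
  rw [setIntegral_congr_fun measurableSet_Ioi hfun]
  have i0 := int_rpow (by norm_num : (-1:ℝ) < 0)
  have i1 := int_rpow (by norm_num : (-1:ℝ) < 1)
  have i2 := int_rpow hγ
  have i3 := int_rpow (by linarith : (-1:ℝ) < γ + 1)
  have I01 : IntegrableOn (fun t : ℝ => a0 * (Real.exp (-t) * t ^ (0:ℝ))
      + a1 * (Real.exp (-t) * t ^ (1:ℝ))) (Ioi 0) volume :=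
    (i0.const_mul a0).add (i1.const_mul a1)
  have I012 : IntegrableOn (fun t : ℝ => a0 * (Real.exp (-t) * t ^ (0:ℝ))
      + a1 * (Real.exp (-t) * t ^ (1:ℝ)) + a2 * (Real.exp (-t) * t ^ γ)) (Ioi 0) volume :=
    I01.add (i2.const_mul a2)
  rw [integral_add I012 (i3.const_mul a3), integral_add I01 (i2.const_mul a2),
    integral_add (i0.const_mul a0) (i1.const_mul a1),
    integral_const_mul, integral_const_mul, integral_const_mul, integral_const_mul,
    int_rpow_val (by norm_num : (-1:ℝ) < 0), int_rpow_val (by norm_num : (-1:ℝ) < 1),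
    int_rpow_val hγ, int_rpow_val (by linarith : (-1:ℝ) < γ + 1)]
  have hG1 : Real.Gamma ((0:ℝ) + 1) = 1 := by norm_num [Real.Gamma_one]
  have hG2 : Real.Gamma ((1:ℝ) + 1) = 1 := by
    rw [Real.Gamma_add_one one_ne_zero, Real.Gamma_one]; norm_num
  have hG3 : Real.Gamma (γ + 1 + 1) = (γ + 1) * Real.Gamma (γ + 1) :=
    Real.Gamma_add_one (by linarith)
  rw [hG1, hG2, hG3]
  ring

/-- **The GEV score is centered** (eq. (31), first part): for `γ₀ > -1/2`, `γ₀ ≠ 0`,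
each component of the score, evaluated at `θ₀ = (γ₀,0,1)` along the quantile curve
`s ↦ Q_{γ₀}(s)`, is integrable on `(0,1)` and integrates to `0`. -/
theorem gev_score_centered (γ₀ : ℝ) (hγ : -(1/2) < γ₀) (hγ0 : γ₀ ≠ 0) :
    ∀ i : Fin 3,
      IntegrableOn (fun s => score i (θ₀ γ₀) (Qgev γ₀ s)) (Set.Ioo (0:ℝ) 1) volume ∧
      ∫ s in Set.Ioo (0:ℝ) 1, score i (θ₀ γ₀) (Qgev γ₀ s) = 0 := by
  have hγ1 : (-1:ℝ) < γ₀ := by linarith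
  have hγ10 : γ₀ + 1 ≠ 0 := by intro h; nlinarith
  have hQ : ∀ s ∈ Set.Ioo (0:ℝ) 1, Qgev γ₀ s = ((-Real.log s) ^ (-γ₀) - 1) / γ₀ := by
    intro s _
    simp [Qgev, hγ0]
  have hlog : ∀ s ∈ Set.Ioo (0:ℝ) 1, 0 < -Real.log s := by
    intro s hs
    simpa using Real.log_neg hs.1 hs.2
  intro i
  fin_cases i
  · -- γ component
    show IntegrableOn (fun s => score 0 (θ₀ γ₀) (Qgev γ₀ s)) (Set.Ioo (0:ℝ) 1) volume ∧
      ∫ s in Set.Ioo (0:ℝ) 1, score 0 (θ₀ γ₀) (Qgev γ₀ s) = 0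
    set F : ℝ → ℝ := fun t => ((t - 1) * Real.log t) / γ₀
        + (t - (1 + γ₀) + (1 + γ₀) * t ^ γ₀ - t ^ (γ₀ + 1)) / γ₀ ^ 2 with hFdef
    have hEq : EqOn (fun s => score 0 (θ₀ γ₀) (Qgev γ₀ s)) (fun s => F (-Real.log s))
        (Set.Ioo (0:ℝ) 1) := by
      intro s hs
      simp only
      rw [hQ s hs, score_gamma_eq hγ0 (hlog s hs)]
    have hsplit : (fun t : ℝ => Real.exp (-t) * F t)
        = fun t => (1/γ₀) * (Real.exp (-t) * ((t - 1) * Real.log t))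
          + Real.exp (-t) * (-(1+γ₀)/γ₀^2 + (1/γ₀^2) * t + ((1+γ₀)/γ₀^2) * t ^ γ₀
            + (-1/γ₀^2) * t ^ (γ₀ + 1)) := by
      funext t
      simp only [hFdef]
      ring
    have hInt : IntegrableOn (fun t : ℝ => Real.exp (-t) * F t) (Ioi 0) volume := by
      rw [hsplit]
      exact (tlog_integrable.const_mul _).add
        (combo_integrable hγ1 (-(1+γ₀)/γ₀^2) (1/γ₀^2) ((1+γ₀)/γ₀^2) (-1/γ₀^2))
    have hVal : ∫ t in Ioi (0:ℝ), Real.exp (-t) * F t = 0 := by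
      have J1 : IntegrableOn (fun t : ℝ =>
          (1/γ₀) * (Real.exp (-t) * ((t - 1) * Real.log t))) (Ioi 0) volume :=
        tlog_integrable.const_mul _
      rw [hsplit, integral_add J1
          (combo_integrable hγ1 (-(1+γ₀)/γ₀^2) (1/γ₀^2) ((1+γ₀)/γ₀^2) (-1/γ₀^2)),
        integral_const_mul, tlog_integral,
        combo_integral hγ1 (-(1+γ₀)/γ₀^2) (1/γ₀^2) ((1+γ₀)/γ₀^2) (-1/γ₀^2)]
      field_simp
      ring
    refine ⟨((cov_integrable F).2 hInt).congr_fun hEq.symm measurableSet_Ioo, ?_⟩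
    rw [setIntegral_congr_fun measurableSet_Ioo hEq, cov_integral F, hVal]
  · -- μ component
    show IntegrableOn (fun s => score 1 (θ₀ γ₀) (Qgev γ₀ s)) (Set.Ioo (0:ℝ) 1) volume ∧
      ∫ s in Set.Ioo (0:ℝ) 1, score 1 (θ₀ γ₀) (Qgev γ₀ s) = 0
    set F : ℝ → ℝ := fun t => (γ₀ + 1) * t ^ γ₀ - t ^ (γ₀ + 1) with hFdef
    have hEq : EqOn (fun s => score 1 (θ₀ γ₀) (Qgev γ₀ s)) (fun s => F (-Real.log s))
        (Set.Ioo (0:ℝ) 1) := by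
      intro s hs
      simp only
      rw [hQ s hs, score_mu_eq hγ0 (hlog s hs)]
    have hsplit : (fun t : ℝ => Real.exp (-t) * F t)
        = fun t => Real.exp (-t) * (0 + 0 * t + (γ₀+1) * t ^ γ₀ + (-1) * t ^ (γ₀ + 1)) := by
      funext t
      simp only [hFdef]
      ring
    have hInt : IntegrableOn (fun t : ℝ => Real.exp (-t) * F t) (Ioi 0) volume := by
      rw [hsplit]
      exact combo_integrable hγ1 0 0 (γ₀+1) (-1)
    have hVal : ∫ t in Ioi (0:ℝ), Real.exp (-t) * F t = 0 := by
      rw [hsplit, combo_integral hγ1 0 0 (γ₀+1) (-1)]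
      ring
    refine ⟨((cov_integrable F).2 hInt).congr_fun hEq.symm measurableSet_Ioo, ?_⟩
    rw [setIntegral_congr_fun measurableSet_Ioo hEq, cov_integral F, hVal]
  · -- σ component
    show IntegrableOn (fun s => score 2 (θ₀ γ₀) (Qgev γ₀ s)) (Set.Ioo (0:ℝ) 1) volume ∧
      ∫ s in Set.Ioo (0:ℝ) 1, score 2 (θ₀ γ₀) (Qgev γ₀ s) = 0
    set F : ℝ → ℝ := fun t => ((γ₀ + 1) * (1 - t ^ γ₀) - (t - t ^ (γ₀ + 1))) / γ₀ - 1 with hFdef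
    have hEq : EqOn (fun s => score 2 (θ₀ γ₀) (Qgev γ₀ s)) (fun s => F (-Real.log s))
        (Set.Ioo (0:ℝ) 1) := by
      intro s hs
      simp only
      rw [hQ s hs, score_sigma_eq hγ0 (hlog s hs)]
    have hsplit : (fun t : ℝ => Real.exp (-t) * F t)
        = fun t => Real.exp (-t) * (((γ₀+1)/γ₀ - 1) + (-1/γ₀) * t + (-(γ₀+1)/γ₀) * t ^ γ₀
          + (1/γ₀) * t ^ (γ₀ + 1)) := by
      funext t
      simp only [hFdef]
      ring
    have hInt : IntegrableOn (fun t : ℝ => Real.exp (-t) * F t) (Ioi 0) volume := by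
      rw [hsplit]
      exact combo_integrable hγ1 _ _ _ _
    have hVal : ∫ t in Ioi (0:ℝ), Real.exp (-t) * F t = 0 := by
      rw [hsplit, combo_integral hγ1 ((γ₀+1)/γ₀ - 1) (-1/γ₀) (-(γ₀+1)/γ₀) (1/γ₀)]
      field_simp
      ring
    refine ⟨((cov_integrable F).2 hInt).congr_fun hEq.symm measurableSet_Ioo, ?_⟩
    rw [setIntegral_congr_fun measurableSet_Ioo hEq, cov_integral F, hVal]

end BMMLE
end
end

section
/- Derivative of the GEV transform in the shape parameter: for every γ ≠ 0 and x ∈ ℝ with 1 + γx > 0, the function γ ↦ (1+γx)^{−1/γ} is differentiable at γ and its derivative equals z·(log z)²·h(γ·log z), where z = (1+γx)^{−1/γ} and h(y) = (e^y − 1 − y)/y² for y ≠ 0, h(0) = 1/2. -/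
open MeasureTheory ProbabilityTheory Filter Real Topology Matrix Set

noncomputable section

namespace BMMLE

/-- The auxiliary function `h(x) = (eˣ - 1 - x)/x²`, `h(0) = 1/2`. -/
def hAux (x : ℝ) : ℝ := if x = 0 then 1/2 else (Real.exp x - 1 - x) / x ^ 2

/-- **Derivative of the GEV transform in the shape parameter**: for `γ ≠ 0` and
`1 + γx > 0`, the map `γ ↦ (1+γx)^{-1/γ}` is differentiable at `γ` with derivative
`z (log z)² h(γ log z)` where `z = (1+γx)^{-1/γ}`. -/
theorem gev_transform_deriv_shape (γ x : ℝ) (hγ : γ ≠ 0) (hx : 0 < 1 + γ * x) :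
    HasDerivAt (fun g : ℝ => (1 + g * x) ^ (-1 / g))
      ((1 + γ * x) ^ (-1 / γ) * (Real.log ((1 + γ * x) ^ (-1 / γ))) ^ 2 *
        hAux (γ * Real.log ((1 + γ * x) ^ (-1 / γ)))) γ := by
  have hx' : (1 : ℝ) + γ * x ≠ 0 := ne_of_gt hx
  have h1 : HasDerivAt (fun g : ℝ => 1 + g * x) x γ := by
    simpa using ((hasDerivAt_id γ).mul_const x).const_add 1
  have hL : HasDerivAt (fun g : ℝ => Real.log (1 + g * x)) (x / (1 + γ * x)) γ := by
    exact ((Real.hasDerivAt_log hx').comp γ h1).congr_deriv (show _ = x / (1 + γ * x) by ring)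
  have hinv : HasDerivAt (fun g : ℝ => -1 / g) (1 / γ ^ 2) γ := by
    have h2 : HasDerivAt (fun g : ℝ => -g⁻¹) (-(-(γ ^ 2)⁻¹)) γ := (hasDerivAt_inv hγ).neg
    have e : (fun g : ℝ => -1 / g) = fun g => -g⁻¹ := by
      funext g; rw [neg_div, one_div]
    rw [e]
    exact h2.congr_deriv (by rw [neg_neg, one_div])
  have hmul : HasDerivAt (fun g : ℝ => (-1 / g) * Real.log (1 + g * x))
      ((1 / γ ^ 2) * Real.log (1 + γ * x) + (-1 / γ) * (x / (1 + γ * x))) γ := hinv.mul hL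
  have hexp := hmul.exp
  have hev : ∀ᶠ g in 𝓝 γ, (0 : ℝ) < 1 + g * x :=
    h1.continuousAt.eventually (eventually_gt_nhds hx)
  have heq : (fun g : ℝ => Real.exp ((-1 / g) * Real.log (1 + g * x)))
      =ᶠ[𝓝 γ] fun g : ℝ => (1 + g * x) ^ (-1 / g) := by
    filter_upwards [hev] with g hg
    rw [Real.rpow_def_of_pos hg, mul_comm]
  have hfin := hexp.congr_of_eventuallyEq heq.symm
  refine hfin.congr_deriv (Eq.symm ?_)
  have hz : (1 + γ * x) ^ (-1 / γ) = Real.exp ((-1 / γ) * Real.log (1 + γ * x)) := by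
    rw [Real.rpow_def_of_pos hx, mul_comm]
  have hlogz : Real.log ((1 + γ * x) ^ (-1 / γ)) = (-1 / γ) * Real.log (1 + γ * x) := by
    rw [hz, Real.log_exp]
  rw [hlogz, hz]
  have harg : γ * ((-1 / γ) * Real.log (1 + γ * x)) = -Real.log (1 + γ * x) := by
    field_simp
  rw [harg]
  by_cases hx0 : x = 0
  · simp [hx0, hAux]
  · have hLne : Real.log (1 + γ * x) ≠ 0 := by
      intro h
      have h2 := Real.exp_log hx
      rw [h, Real.exp_zero] at h2
      have : γ * x = 0 := by linarith
      rcases mul_eq_zero.1 this with h' | h' <;> [exact hγ h'; exact hx0 h']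
    have hEL : Real.exp (-Real.log (1 + γ * x)) = (1 + γ * x)⁻¹ := by
      rw [Real.exp_neg, Real.exp_log hx]
    rw [hAux, if_neg (neg_ne_zero.2 hLne), hEL]
    field_simp
    ring

end BMMLE
end
end

section
/- Bounds on the derivatives of z(γ,x) = (1+γx)^{−1/γ}: for every γ0 ∈ ℝ and ε > 0 there exist C > 0 and δ > 0 such that for all γ ∈ (γ0−δ, γ0+δ), γ ≠ 0, and all x with 1 + γx > 0, writing z = z(γ,x): (i) for the first-order partial derivatives, |∂z/∂x^i ∂γ^{1−i}| ≤ C·max(z^{1+iγ0−ε}, z^{1+iγ0+ε}, z^{1+γ0−ε}, z^{1+γ0+ε}) for i = 0,1; (ii) for the second-order partial derivatives, |∂²z/∂x^i ∂γ^{2−i}| ≤ C·max(z^{1+iγ0−ε}, z^{1+iγ0+ε}, z^{1+2γ0−ε}, z^{1+2γ0+ε}) for i = 0,1,2; (iii) for the third-order partial derivatives, |∂³z/∂x^i ∂γ^{3−i}| ≤ C·max(z^{1+iγ0−ε}, z^{1+iγ0+ε}, z^{1+3γ0−ε}, z^{1+3γ0+ε}) for i = 0,1,2,3. -/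
open MeasureTheory ProbabilityTheory Filter Real Topology Matrix Set

noncomputable section

namespace BMMLE

/-- `z(γ, x) = (1 + γ x)^{-1/γ}`. -/
def zfun (γ x : ℝ) : ℝ := (1 + γ * x) ^ (-1 / γ)

/-- Iterated mixed partial derivatives of a function of `(γ, x)`: `true` entries
differentiate in `x`, `false` entries differentiate in `γ`. -/
def mixedDeriv : List Bool → (ℝ → ℝ → ℝ) → ℝ → ℝ → ℝ
  | [], f => f
  | true :: L, f => fun γ x => deriv (fun x' => mixedDeriv L f γ x') x
  | false :: L, f => fun γ x => deriv (fun γ' => mixedDeriv L f γ' x) γ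

/-- `z` in exponential form. -/
def zE (γ x : ℝ) : ℝ := Real.exp (-Real.log (1 + γ * x) / γ)
def pI (γ x : ℝ) : ℝ := (1 + γ * x)⁻¹
def qQ (γ x : ℝ) : ℝ := (1 + γ * x)⁻¹ - 1 + Real.log (1 + γ * x)
def sS (γ x : ℝ) : ℝ := qQ γ x ^ 2 + γ * (1 - pI γ x) ^ 2 - 2 * γ * qQ γ x
def tT (γ x : ℝ) : ℝ := qQ γ x * sS γ x - 4 * γ * sS γ x
  + 2 * γ * qQ γ x * (1 - pI γ x) ^ 2 + γ ^ 2 * (1 - pI γ x) ^ 2 * (2 * pI γ x - 1)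
  - 2 * γ ^ 2 * qQ γ x

/-- Table of partial derivatives of `z`: `Fc i n` is `∂ⁿz/∂xⁱ∂γ^{n-i}`. -/
def Fc : ℕ → ℕ → ℝ → ℝ → ℝ
  | 0, 0 => fun γ x => zE γ x
  | 0, 1 => fun γ x => zE γ x * qQ γ x / γ ^ 2
  | 1, 1 => fun γ x => -(zE γ x * pI γ x)
  | 0, 2 => fun γ x => zE γ x * sS γ x / γ ^ 4
  | 1, 2 => fun γ x => zE γ x * pI γ x * (γ * (1 - pI γ x) - qQ γ x) / γ ^ 2
  | 2, 2 => fun γ x => (1 + γ) * (zE γ x * pI γ x ^ 2)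
  | 0, 3 => fun γ x => zE γ x * tT γ x / γ ^ 6
  | 1, 3 => fun γ x => zE γ x * pI γ x *
      (-qQ γ x ^ 2 + 2 * γ * qQ γ x * (2 - pI γ x) - (γ + 2 * γ ^ 2) * (1 - pI γ x) ^ 2) / γ ^ 4
  | 2, 3 => fun γ x => zE γ x * pI γ x ^ 2 *
      ((1 + γ) * qQ γ x - 2 * γ * (1 + γ) * (1 - pI γ x) + γ ^ 2) / γ ^ 2
  | 3, 3 => fun γ x => -((1 + γ) * (1 + 2 * γ) * (zE γ x * pI γ x ^ 3))
  | _, _ => fun _ _ => 0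

section DerivLemmas
variable {γ x : ℝ} (hγ : γ ≠ 0) (hu : 0 < 1 + γ * x)

lemma hx_base (hγ : γ ≠ 0) (hu : 0 < 1 + γ * x) :
    HasDerivAt (fun x' => zE γ x') (zE γ x * (-(γ / (1 + γ * x)) / γ)) x ∧
    HasDerivAt (fun x' => pI γ x') (-γ / (1 + γ * x) ^ 2) x ∧
    HasDerivAt (fun x' => qQ γ x') (-γ / (1 + γ * x) ^ 2 + γ / (1 + γ * x)) x := by
  have hu' := ne_of_gt hu
  have h1 : HasDerivAt (fun x' : ℝ => 1 + γ * x') γ x := by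
    simpa using ((hasDerivAt_id x).const_mul γ).const_add 1
  have hlog := h1.log hu'
  refine ⟨((hlog.neg).div_const γ).exp, h1.inv hu', ?_⟩
  simpa [qQ, Pi.add_def] using ((h1.inv hu').sub_const 1).add hlog

lemma hg_base (hγ : γ ≠ 0) (hu : 0 < 1 + γ * x) :
    HasDerivAt (fun γ' => zE γ' x)
      (zE γ x * ((-(x / (1 + γ * x)) * γ - -Real.log (1 + γ * x) * 1) / γ ^ 2)) γ ∧
    HasDerivAt (fun γ' => pI γ' x) (-x / (1 + γ * x) ^ 2) γ ∧
    HasDerivAt (fun γ' => qQ γ' x) (-x / (1 + γ * x) ^ 2 + x / (1 + γ * x)) γ := by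
  have hu' := ne_of_gt hu
  have h1 : HasDerivAt (fun γ' : ℝ => 1 + γ' * x) x γ := by
    simpa using ((hasDerivAt_id γ).mul_const x).const_add 1
  have hlog := h1.log hu'
  refine ⟨((hlog.neg.div (hasDerivAt_id γ) hγ)).exp, h1.inv hu', ?_⟩
  simpa [qQ, Pi.add_def] using ((h1.inv hu').sub_const 1).add hlog

end DerivLemmas

section DerivLemmas2
variable {γ x : ℝ}

lemma hd_sq (γ : ℝ) : HasDerivAt (fun γ' : ℝ => γ' ^ 2) (2 * γ) γ := by
  simpa [Pi.pow_def] using (hasDerivAt_id γ).pow 2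

lemma hd_p4 (γ : ℝ) : HasDerivAt (fun γ' : ℝ => γ' ^ 4) (4 * γ ^ 3) γ := by
  simpa [Pi.pow_def] using (hasDerivAt_id γ).pow 4

lemma dx00 (hγ : γ ≠ 0) (hu : 0 < 1 + γ * x) :
    HasDerivAt (fun x' => Fc 0 0 γ x') (Fc 1 1 γ x) x := by
  obtain ⟨hz, hp, hq⟩ := hx_base hγ hu
  refine hz.congr_deriv ?_
  simp only [Fc, zE, pI]
  field_simp

lemma dg00 (hγ : γ ≠ 0) (hu : 0 < 1 + γ * x) :
    HasDerivAt (fun γ' => Fc 0 0 γ' x) (Fc 0 1 γ x) γ := by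
  obtain ⟨hz, hp, hq⟩ := hg_base hγ hu
  refine hz.congr_deriv ?_
  simp only [Fc, zE, pI, qQ]
  have hu' := ne_of_gt hu
  field_simp
  ring

lemma dx01 (hγ : γ ≠ 0) (hu : 0 < 1 + γ * x) :
    HasDerivAt (fun x' => Fc 0 1 γ x') (Fc 1 2 γ x) x := by
  obtain ⟨hz, hp, hq⟩ := hx_base hγ hu
  have h := (hz.mul hq).div_const (γ ^ 2)
  refine h.congr_deriv ?_
  simp only [Fc, zE, pI, qQ]
  have hu' := ne_of_gt hu
  field_simp
  ring

lemma dg01 (hγ : γ ≠ 0) (hu : 0 < 1 + γ * x) :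
    HasDerivAt (fun γ' => Fc 0 1 γ' x) (Fc 0 2 γ x) γ := by
  obtain ⟨hz, hp, hq⟩ := hg_base hγ hu
  have h := (hz.mul hq).div (hd_sq γ) (pow_ne_zero 2 hγ)
  refine h.congr_deriv ?_
  simp only [Fc, Pi.mul_apply, Pi.sub_apply, Pi.pow_apply, Pi.add_apply, Pi.div_apply, id_eq, zE, pI, qQ, sS]
  have hu' := ne_of_gt hu
  field_simp
  ring

lemma dx11 (hγ : γ ≠ 0) (hu : 0 < 1 + γ * x) :
    HasDerivAt (fun x' => Fc 1 1 γ x') (Fc 2 2 γ x) x := by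
  obtain ⟨hz, hp, hq⟩ := hx_base hγ hu
  have h := (hz.mul hp).neg
  refine h.congr_deriv ?_
  simp only [Fc, Pi.mul_apply, Pi.sub_apply, Pi.pow_apply, Pi.add_apply, Pi.div_apply, id_eq, zE, pI]
  have hu' := ne_of_gt hu
  field_simp
  ring

lemma dg11 (hγ : γ ≠ 0) (hu : 0 < 1 + γ * x) :
    HasDerivAt (fun γ' => Fc 1 1 γ' x) (Fc 1 2 γ x) γ := by
  obtain ⟨hz, hp, hq⟩ := hg_base hγ hu
  have h := (hz.mul hp).neg
  refine h.congr_deriv ?_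
  simp only [Fc, Pi.mul_apply, Pi.sub_apply, Pi.pow_apply, Pi.add_apply, Pi.div_apply, id_eq, zE, pI, qQ]
  have hu' := ne_of_gt hu
  field_simp
  ring

lemma dx02 (hγ : γ ≠ 0) (hu : 0 < 1 + γ * x) :
    HasDerivAt (fun x' => Fc 0 2 γ x') (Fc 1 3 γ x) x := by
  obtain ⟨hz, hp, hq⟩ := hx_base hγ hu
  have hs : HasDerivAt (fun x' => sS γ x')
      (2 * qQ γ x ^ 1 * (-γ / (1 + γ * x) ^ 2 + γ / (1 + γ * x))
        + γ * (2 * (1 - pI γ x) ^ 1 * -(-γ / (1 + γ * x) ^ 2))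
        - 2 * γ * (-γ / (1 + γ * x) ^ 2 + γ / (1 + γ * x))) x := by
    simpa [sS, Pi.add_def, Pi.sub_def, Pi.pow_def] using ((hq.pow 2).add (((hp.const_sub 1).pow 2).const_mul γ)).sub
      (hq.const_mul (2 * γ))
  have h := (hz.mul hs).div_const (γ ^ 4)
  refine h.congr_deriv ?_
  simp only [Fc, Pi.mul_apply, Pi.sub_apply, Pi.pow_apply, Pi.add_apply, Pi.div_apply, id_eq, zE, pI, qQ, sS]
  have hu' := ne_of_gt hu
  field_simp
  ring

lemma dg02 (hγ : γ ≠ 0) (hu : 0 < 1 + γ * x) :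
    HasDerivAt (fun γ' => Fc 0 2 γ' x) (Fc 0 3 γ x) γ := by
  obtain ⟨hz, hp, hq⟩ := hg_base hγ hu
  have hs : HasDerivAt (fun γ' => sS γ' x)
      (2 * qQ γ x ^ 1 * (-x / (1 + γ * x) ^ 2 + x / (1 + γ * x))
        + (1 * (1 - pI γ x) ^ 2 + γ * (2 * (1 - pI γ x) ^ 1 * -(-x / (1 + γ * x) ^ 2)))
        - 2 * (1 * qQ γ x + γ * (-x / (1 + γ * x) ^ 2 + x / (1 + γ * x)))) γ := by
    simpa [sS, mul_assoc, Pi.add_def, Pi.sub_def, Pi.pow_def, Pi.mul_def] using ((hq.pow 2).add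
      ((hasDerivAt_id γ).mul ((hp.const_sub 1).pow 2))).sub
      (((hasDerivAt_id γ).mul hq).const_mul 2)
  have h := (hz.mul hs).div (hd_p4 γ) (pow_ne_zero 4 hγ)
  refine h.congr_deriv ?_
  simp only [Fc, Pi.mul_apply, Pi.sub_apply, Pi.pow_apply, Pi.add_apply, Pi.div_apply, id_eq, zE, pI, qQ, sS, tT]
  have hu' := ne_of_gt hu
  field_simp
  ring

lemma dx12 (hγ : γ ≠ 0) (hu : 0 < 1 + γ * x) :
    HasDerivAt (fun x' => Fc 1 2 γ x') (Fc 2 3 γ x) x := by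
  obtain ⟨hz, hp, hq⟩ := hx_base hγ hu
  have hr := ((hp.const_sub 1).const_mul γ).sub hq
  have h := ((hz.mul hp).mul hr).div_const (γ ^ 2)
  refine h.congr_deriv ?_
  simp only [Fc, Pi.mul_apply, Pi.sub_apply, Pi.pow_apply, Pi.add_apply, Pi.div_apply, id_eq, zE, pI, qQ]
  have hu' := ne_of_gt hu
  field_simp
  ring

lemma dg12 (hγ : γ ≠ 0) (hu : 0 < 1 + γ * x) :
    HasDerivAt (fun γ' => Fc 1 2 γ' x) (Fc 1 3 γ x) γ := by
  obtain ⟨hz, hp, hq⟩ := hg_base hγ hu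
  have hr := ((hasDerivAt_id γ).mul (hp.const_sub 1)).sub hq
  have h := ((hz.mul hp).mul hr).div (hd_sq γ) (pow_ne_zero 2 hγ)
  refine h.congr_deriv ?_
  simp only [Fc, Pi.mul_apply, Pi.sub_apply, Pi.pow_apply, Pi.add_apply, Pi.div_apply, id_eq, zE, pI, qQ]
  have hu' := ne_of_gt hu
  field_simp
  ring

lemma dx22 (hγ : γ ≠ 0) (hu : 0 < 1 + γ * x) :
    HasDerivAt (fun x' => Fc 2 2 γ x') (Fc 3 3 γ x) x := by
  obtain ⟨hz, hp, hq⟩ := hx_base hγ hu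
  have h := (hz.mul (hp.pow 2)).const_mul (1 + γ)
  refine h.congr_deriv ?_
  simp only [Fc, Pi.mul_apply, Pi.sub_apply, Pi.pow_apply, Pi.add_apply, Pi.div_apply, id_eq, Nat.cast_ofNat, Nat.reduceSub, pow_one, zE, pI]
  have hu' := ne_of_gt hu
  field_simp
  ring

lemma dg22 (hγ : γ ≠ 0) (hu : 0 < 1 + γ * x) :
    HasDerivAt (fun γ' => Fc 2 2 γ' x) (Fc 2 3 γ x) γ := by
  obtain ⟨hz, hp, hq⟩ := hg_base hγ hu
  have h := ((hasDerivAt_id γ).const_add 1).mul (hz.mul (hp.pow 2))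
  refine h.congr_deriv ?_
  simp only [Fc, Pi.mul_apply, Pi.sub_apply, Pi.pow_apply, Pi.add_apply, Pi.div_apply, id_eq, Nat.cast_ofNat, Nat.reduceSub, pow_one, zE, pI, qQ]
  have hu' := ne_of_gt hu
  field_simp
  ring

end DerivLemmas2

variable {γ x : ℝ}

lemma dxFc {i n : ℕ} (hin : i ≤ n) (hn : n ≤ 2) (hγ : γ ≠ 0) (hu : 0 < 1 + γ * x) :
    HasDerivAt (fun x' => Fc i n γ x') (Fc (i+1) (n+1) γ x) x := by
  interval_cases n <;> interval_cases i
  exacts [dx00 hγ hu, dx01 hγ hu, dx11 hγ hu, dx02 hγ hu, dx12 hγ hu, dx22 hγ hu]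

lemma dgFc {i n : ℕ} (hin : i ≤ n) (hn : n ≤ 2) (hγ : γ ≠ 0) (hu : 0 < 1 + γ * x) :
    HasDerivAt (fun γ' => Fc i n γ' x) (Fc i (n+1) γ x) γ := by
  interval_cases n <;> interval_cases i
  exacts [dg00 hγ hu, dg01 hγ hu, dg11 hγ hu, dg02 hγ hu, dg12 hγ hu, dg22 hγ hu]

lemma mixedDeriv_zfun_eq : ∀ (L : List Bool), L.length ≤ 3 → ∀ {γ x : ℝ}, γ ≠ 0 →
    0 < 1 + γ * x → mixedDeriv L zfun γ x = Fc (L.count true) L.length γ x := by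
  intro L
  induction L with
  | nil =>
    intro _ γ x hγ hu
    simp only [mixedDeriv, List.count_nil, List.length_nil, Fc, zfun, zE]
    rw [Real.rpow_def_of_pos hu]
    congr 1
    ring
  | cons b L ih =>
    intro hlen γ x hγ hu
    have hlen' : L.length ≤ 2 := by simpa using Nat.succ_le_succ_iff.mp hlen
    have hcount : L.count true ≤ L.length := List.count_le_length
    cases b with
    | true =>
      have hop : IsOpen {x' : ℝ | 0 < 1 + γ * x'} :=
        isOpen_lt continuous_const (by continuity)
      have hev : (fun x' => mixedDeriv L zfun γ x')
          =ᶠ[nhds x] fun x' => Fc (L.count true) L.length γ x' := by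
        filter_upwards [hop.mem_nhds hu] with x' hx'
        exact ih (le_trans hlen' (by norm_num)) hγ hx'
      show deriv (fun x' => mixedDeriv L zfun γ x') x = _
      rw [hev.deriv_eq, (dxFc hcount hlen' hγ hu).deriv]
      simp [List.count_cons]
    | false =>
      have hop : IsOpen {γ' : ℝ | γ' ≠ 0 ∧ 0 < 1 + γ' * x} := by
        have h2 : IsOpen {γ' : ℝ | 0 < 1 + γ' * x} :=
          isOpen_lt continuous_const (by continuity)
        exact IsOpen.inter isOpen_ne h2
      have hev : (fun γ' => mixedDeriv L zfun γ' x)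
          =ᶠ[nhds γ] fun γ' => Fc (L.count true) L.length γ' x := by
        filter_upwards [hop.mem_nhds ⟨hγ, hu⟩] with γ' hγ'
        exact ih (le_trans hlen' (by norm_num)) hγ'.1 hγ'.2
      show deriv (fun γ' => mixedDeriv L zfun γ' x) γ = _
      rw [hev.deriv_eq, (dgFc hcount hlen' hγ hu).deriv]
      simp [List.count_cons]



/-- Taylor remainder of `exp`. -/
def Rex (k : ℕ) (t : ℝ) : ℝ := Real.exp t - ∑ j ∈ Finset.range k, t ^ j / j.factorial

lemma Rex_one (t : ℝ) : Rex 1 t = Real.exp t - 1 := by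
  simp [Rex]

lemma Rex_two (t : ℝ) : Rex 2 t = Real.exp t - 1 - t := by
  simp [Rex, Finset.sum_range_succ]; ring

lemma Rex_three (t : ℝ) : Rex 3 t = Real.exp t - 1 - t - t ^ 2 / 2 := by
  simp [Rex, Finset.sum_range_succ]; norm_num; ring

lemma Rex_four (t : ℝ) : Rex 4 t = Real.exp t - 1 - t - t ^ 2 / 2 - t ^ 3 / 6 := by
  have : ((Nat.factorial 3 : ℕ) : ℝ) = 6 := by norm_num [Nat.factorial]
  simp [Rex, Finset.sum_range_succ, this]; ring

lemma continuous_Rex (k : ℕ) : Continuous (Rex k) := by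
  unfold Rex
  exact Real.continuous_exp.sub (continuous_finset_sum _ fun j _ =>
    (continuous_pow j).div_const _)

lemma hasDerivAt_Rex (k : ℕ) (t : ℝ) : HasDerivAt (Rex (k+1)) (Rex k t) t := by
  have hsum : HasDerivAt (fun t' : ℝ => ∑ j ∈ Finset.range (k+1), t' ^ j / (j.factorial : ℝ))
      (∑ j ∈ Finset.range (k+1), ((j : ℝ) * t ^ (j-1)) / (j.factorial : ℝ)) t := by
    apply HasDerivAt.fun_sum
    intro j _
    exact (hasDerivAt_pow j t).div_const _
  have h := (Real.hasDerivAt_exp t).sub hsum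
  refine h.congr_deriv ?_
  unfold Rex
  congr 1
  rw [Finset.sum_range_succ']
  simp only [Nat.cast_zero, Nat.factorial_zero, Nat.cast_one, zero_mul, zero_div, add_zero,
    Nat.add_sub_cancel]
  apply Finset.sum_congr rfl
  intro j _
  rw [Nat.factorial_succ]
  have h1 : ((j:ℝ) + 1) ≠ 0 := by positivity
  have h2 : (j.factorial : ℝ) ≠ 0 := by exact_mod_cast j.factorial_ne_zero
  push_cast
  field_simp

lemma abs_Rex_le : ∀ (k : ℕ) (t : ℝ), |Rex k t| ≤ |t| ^ k * max 1 (Real.exp t) := by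
  intro k
  induction k with
  | zero =>
    intro t
    simp only [Rex, Finset.range_zero, Finset.sum_empty, sub_zero, pow_zero, one_mul]
    rw [abs_of_pos (Real.exp_pos t)]
    exact le_max_right _ _
  | succ k ih =>
    intro t
    have h0 : Rex (k+1) 0 = 0 := by
      unfold Rex
      rw [Finset.sum_range_succ']
      simp
    have key : Rex (k+1) t = ∫ s in (0:ℝ)..t, Rex k s := by
      rw [intervalIntegral.integral_eq_sub_of_hasDerivAt
        (fun s _ => hasDerivAt_Rex k s)
        ((continuous_Rex k).intervalIntegrable 0 t), h0, sub_zero]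
    rw [key]
    have hb : ∀ s ∈ Set.uIoc (0:ℝ) t, ‖Rex k s‖ ≤ |t| ^ k * max 1 (Real.exp t) := by
      intro s hs
      have hs1 : |s| ≤ |t| := by
        rcases Set.mem_uIoc.mp hs with h | h
        · rw [abs_of_pos h.1, abs_of_nonneg (le_trans h.1.le h.2)]; exact h.2
        · rw [abs_of_nonpos h.2, abs_of_neg (lt_of_lt_of_le h.1 h.2)]; linarith [h.1]
      have hs2 : max 1 (Real.exp s) ≤ max 1 (Real.exp t) := by
        rcases Set.mem_uIoc.mp hs with h | h
        · exact max_le_max le_rfl (Real.exp_le_exp.mpr h.2)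
        · calc max 1 (Real.exp s) ≤ max 1 1 := by
                exact max_le_max le_rfl (Real.exp_le_one_iff.mpr h.2)
            _ ≤ max 1 (Real.exp t) := by simp
      calc ‖Rex k s‖ ≤ |s| ^ k * max 1 (Real.exp s) := ih s
        _ ≤ |t| ^ k * max 1 (Real.exp t) := by
            apply mul_le_mul (pow_le_pow_left₀ (abs_nonneg s) hs1 k) hs2
              (le_trans zero_le_one (le_max_left _ _)) (by positivity)
    calc ‖∫ s in (0:ℝ)..t, Rex k s‖ ≤ (|t| ^ k * max 1 (Real.exp t)) * |t - 0| :=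
          intervalIntegral.norm_integral_le_of_norm_le_const hb
      _ = |t| ^ (k+1) * max 1 (Real.exp t) := by rw [sub_zero]; ring


lemma pow_le_pow16 {w : ℝ} (hw : 0 ≤ w) {k : ℕ} (hk : k ≤ 6) : w ^ k ≤ (1 + w) ^ 6 :=
  calc w ^ k ≤ (1 + w) ^ k := pow_le_pow_left₀ hw (by linarith) k
    _ ≤ (1 + w) ^ 6 := pow_le_pow_right₀ (by linarith) hk

set_option maxHeartbeats 1000000 in
lemma Fc_bound (i n : ℕ) (hin : i ≤ n) (hn1 : 1 ≤ n) (hn : n ≤ 3) {γ x : ℝ}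
    (hγ : γ ≠ 0) (hu : 0 < 1 + γ * x) :
    |Fc i n γ x| ≤ 400 * (1 + |γ|) ^ 2 *
      (zE γ x * pI γ x ^ i * (1 + |Real.log (1 + γ * x) / γ|) ^ 6
        * max 1 (pI γ x) ^ (n - i)) := by
  set s : ℝ := -Real.log (1 + γ * x) with hs
  set w : ℝ := |Real.log (1 + γ * x) / γ| with hwdef
  set M : ℝ := max 1 (Real.exp s) with hMdef
  clear_value s w M
  have hγ' : (0:ℝ) < |γ| := abs_pos.mpr hγ
  have hw0 : 0 ≤ w := hwdef ▸ abs_nonneg _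
  have hM1 : (1:ℝ) ≤ M := hMdef ▸ le_max_left _ _
  have hM0 : (0:ℝ) < M := lt_of_lt_of_le one_pos hM1
  have hz0 : (0:ℝ) < zE γ x := Real.exp_pos _
  have hP' : (1 + γ * x)⁻¹ = Real.exp s := by
    rw [hs, Real.exp_neg, Real.exp_log hu]
  have hP : pI γ x = Real.exp s := hP'
  have hP0 : (0:ℝ) < pI γ x := by rw [hP]; exact Real.exp_pos _
  have hMP : max 1 (pI γ x) = M := by rw [hP, hMdef]
  have habs : |s| = |γ| * w := by
    rw [hwdef, abs_div, hs, abs_neg]; field_simp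
  have e2 : Real.exp (2*s) = Real.exp s ^ 2 := by rw [two_mul, Real.exp_add, sq]
  have e3 : Real.exp (3*s) = Real.exp s ^ 3 := by
    rw [show (3:ℝ)*s = s + (s + s) by ring, Real.exp_add, Real.exp_add, pow_succ, sq]; ring
  have hone_le_pow : ∀ k : ℕ, k ≠ 0 → (1:ℝ) ≤ M ^ k := fun k hk =>
    le_trans hM1 (le_self_pow₀ (by linarith) hk)
  have hM2 : max 1 (Real.exp (2*s)) ≤ M ^ 2 := by
    apply max_le (hone_le_pow 2 (by norm_num))
    rw [e2, hMdef]; exact pow_le_pow_left₀ (Real.exp_nonneg s) (le_max_right 1 _) 2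
  have hM3 : max 1 (Real.exp (3*s)) ≤ M ^ 3 := by
    apply max_le (hone_le_pow 3 (by norm_num))
    rw [e3, hMdef]; exact pow_le_pow_left₀ (Real.exp_nonneg s) (le_max_right 1 _) 3
  have hMM2 : M ≤ M ^ 2 := le_self_pow₀ hM1 (by norm_num)
  have hMM3 : M ≤ M ^ 3 := le_self_pow₀ hM1 (by norm_num)
  have hM23 : M ^ 2 ≤ M ^ 3 := pow_le_pow_right₀ hM1 (by norm_num)
  -- basic component bounds
  have hQ : qQ γ x = Rex 2 s := by rw [Rex_two, qQ, hP', hs]; ring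
  have hQb : |qQ γ x| ≤ |γ| ^ 2 * w ^ 2 * M := by
    rw [hQ]
    calc |Rex 2 s| ≤ |s| ^ 2 * M := by rw [hMdef]; exact abs_Rex_le 2 s
      _ = |γ| ^ 2 * w ^ 2 * M := by rw [habs]; ring
  have h1P : 1 - pI γ x = -Rex 1 s := by rw [Rex_one, hP]; ring
  have h1Pb : |1 - pI γ x| ≤ |γ| * w * M := by
    rw [h1P, abs_neg]
    calc |Rex 1 s| ≤ |s| ^ 1 * M := by rw [hMdef]; exact abs_Rex_le 1 s
      _ = |γ| * w * M := by rw [pow_one, habs]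
  have hW : (1 - pI γ x) ^ 2 - 2 * qQ γ x = Rex 3 (2*s) - 4 * Rex 3 s := by
    rw [hQ, Rex_three, Rex_three, Rex_two, e2, hP]; ring
  have hWb : |(1 - pI γ x) ^ 2 - 2 * qQ γ x| ≤ 12 * (|γ| ^ 3 * w ^ 3 * M ^ 2) := by
    rw [hW]
    have t1 : |Rex 3 (2*s)| ≤ 8 * |s| ^ 3 * M ^ 2 := by
      calc |Rex 3 (2*s)| ≤ |2*s| ^ 3 * max 1 (Real.exp (2*s)) := abs_Rex_le 3 (2*s)
        _ = 8 * |s| ^ 3 * max 1 (Real.exp (2*s)) := by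
            rw [abs_mul, mul_pow]; norm_num
        _ ≤ 8 * |s| ^ 3 * M ^ 2 := by gcongr
    have t2 : |Rex 3 s| ≤ |s| ^ 3 * M ^ 2 := by
      calc |Rex 3 s| ≤ |s| ^ 3 * M := by rw [hMdef]; exact abs_Rex_le 3 s
        _ ≤ |s| ^ 3 * M ^ 2 := by gcongr
    calc |Rex 3 (2*s) - 4 * Rex 3 s| ≤ |Rex 3 (2*s)| + 4 * |Rex 3 s| := by
          refine le_trans (abs_sub _ _) ?_
          rw [abs_mul]; norm_num
      _ ≤ 8 * |s| ^ 3 * M ^ 2 + 4 * (|s| ^ 3 * M ^ 2) := by linarith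
      _ = 12 * (|s| ^ 3 * M ^ 2) := by ring
      _ = 12 * (|γ| ^ 3 * w ^ 3 * M ^ 2) := by rw [habs]; ring
  -- more remainder bounds
  have hR2 : |Rex 2 s| ≤ |s| ^ 2 * M := by rw [hMdef]; exact abs_Rex_le 2 s
  have hR3 : |Rex 3 s| ≤ |s| ^ 3 * M := by rw [hMdef]; exact abs_Rex_le 3 s
  have hR32 : |Rex 3 (2*s)| ≤ 8 * (|s| ^ 3 * M ^ 2) := by
    calc |Rex 3 (2*s)| ≤ |2*s| ^ 3 * max 1 (Real.exp (2*s)) := abs_Rex_le 3 (2*s)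
      _ = 8 * |s| ^ 3 * max 1 (Real.exp (2*s)) := by rw [abs_mul, mul_pow]; norm_num
      _ ≤ 8 * |s| ^ 3 * M ^ 2 := by gcongr
      _ = 8 * (|s| ^ 3 * M ^ 2) := by ring
  have hR4 : |Rex 4 s| ≤ |s| ^ 4 * M := by rw [hMdef]; exact abs_Rex_le 4 s
  have hR42 : |Rex 4 (2*s)| ≤ 16 * (|s| ^ 4 * M ^ 2) := by
    calc |Rex 4 (2*s)| ≤ |2*s| ^ 4 * max 1 (Real.exp (2*s)) := abs_Rex_le 4 (2*s)
      _ = 16 * |s| ^ 4 * max 1 (Real.exp (2*s)) := by rw [abs_mul, mul_pow]; norm_num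
      _ ≤ 16 * |s| ^ 4 * M ^ 2 := by gcongr
      _ = 16 * (|s| ^ 4 * M ^ 2) := by ring
  have hR43 : |Rex 4 (3*s)| ≤ 81 * (|s| ^ 4 * M ^ 3) := by
    calc |Rex 4 (3*s)| ≤ |3*s| ^ 4 * max 1 (Real.exp (3*s)) := abs_Rex_le 4 (3*s)
      _ = 81 * |s| ^ 4 * max 1 (Real.exp (3*s)) := by rw [abs_mul, mul_pow]; norm_num
      _ ≤ 81 * |s| ^ 4 * M ^ 3 := by gcongr
      _ = 81 * (|s| ^ 4 * M ^ 3) := by ring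
  -- Y and X bounds
  have hY : 4 * qQ γ x - 2 * qQ γ x * pI γ x - (1 - pI γ x) ^ 2
      = -3 * Rex 3 (2*s) + 8 * Rex 3 s + 2 * s * Rex 2 s := by
    rw [hQ, Rex_three, Rex_three, Rex_two, e2, hP]; ring
  have hYb : |4 * qQ γ x - 2 * qQ γ x * pI γ x - (1 - pI γ x) ^ 2|
      ≤ 34 * (|γ| ^ 3 * w ^ 3 * M ^ 2) := by
    rw [hY]
    have tri : |(-3) * Rex 3 (2*s) + 8 * Rex 3 s + 2 * s * Rex 2 s|
        ≤ 3 * |Rex 3 (2*s)| + 8 * |Rex 3 s| + 2 * |s| * |Rex 2 s| := by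
      calc |(-3) * Rex 3 (2*s) + 8 * Rex 3 s + 2 * s * Rex 2 s|
          ≤ |(-3) * Rex 3 (2*s) + 8 * Rex 3 s| + |2 * s * Rex 2 s| := abs_add_le _ _
        _ ≤ |(-3) * Rex 3 (2*s)| + |8 * Rex 3 s| + |2 * s * Rex 2 s| := by
            linarith only [abs_add_le ((-3) * Rex 3 (2*s)) (8 * Rex 3 s)]
        _ = 3 * |Rex 3 (2*s)| + 8 * |Rex 3 s| + 2 * |s| * |Rex 2 s| := by
            rw [abs_mul, abs_mul, abs_mul, abs_mul]
            norm_num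
    have hsr2 : |s| * |Rex 2 s| ≤ |s| ^ 3 * M := by
      calc |s| * |Rex 2 s| ≤ |s| * (|s| ^ 2 * M) := by gcongr
        _ = |s| ^ 3 * M := by ring
    have hr3m : |Rex 3 s| ≤ |s| ^ 3 * M ^ 2 := le_trans hR3 (by gcongr)
    have hsr2m : |s| * |Rex 2 s| ≤ |s| ^ 3 * M ^ 2 := le_trans hsr2 (by gcongr)
    calc |(-3) * Rex 3 (2*s) + 8 * Rex 3 s + 2 * s * Rex 2 s|
        ≤ 3 * |Rex 3 (2*s)| + 8 * |Rex 3 s| + 2 * |s| * |Rex 2 s| := tri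
      _ ≤ 3 * (8 * (|s| ^ 3 * M ^ 2)) + 8 * (|s| ^ 3 * M ^ 2) + 2 * (|s| ^ 3 * M ^ 2) := by
          linarith only [hR32, hr3m, hsr2m]
      _ = 34 * (|s| ^ 3 * M ^ 2) := by ring
      _ = 34 * (|γ| ^ 3 * w ^ 3 * M ^ 2) := by rw [habs]; ring
  have hX : (1 - pI γ x) ^ 2 * (2 * pI γ x - 1) - 2 * qQ γ x
        - 4 * ((1 - pI γ x) ^ 2 - 2 * qQ γ x)
      = 2 * Rex 4 (3*s) - 9 * Rex 4 (2*s) + 18 * Rex 4 s := by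
    rw [hQ, Rex_four, Rex_four, Rex_four, Rex_two, e2, e3, hP]; ring
  have hXb : |(1 - pI γ x) ^ 2 * (2 * pI γ x - 1) - 2 * qQ γ x
        - 4 * ((1 - pI γ x) ^ 2 - 2 * qQ γ x)|
      ≤ 324 * (|γ| ^ 4 * w ^ 4 * M ^ 3) := by
    rw [hX]
    have tri : |2 * Rex 4 (3*s) - 9 * Rex 4 (2*s) + 18 * Rex 4 s|
        ≤ 2 * |Rex 4 (3*s)| + 9 * |Rex 4 (2*s)| + 18 * |Rex 4 s| := by
      calc |2 * Rex 4 (3*s) - 9 * Rex 4 (2*s) + 18 * Rex 4 s|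
          ≤ |2 * Rex 4 (3*s) - 9 * Rex 4 (2*s)| + |18 * Rex 4 s| := abs_add_le _ _
        _ ≤ |2 * Rex 4 (3*s)| + |9 * Rex 4 (2*s)| + |18 * Rex 4 s| := by
            linarith only [abs_sub (2 * Rex 4 (3*s)) (9 * Rex 4 (2*s))]
        _ = 2 * |Rex 4 (3*s)| + 9 * |Rex 4 (2*s)| + 18 * |Rex 4 s| := by
            rw [abs_mul, abs_mul, abs_mul]; norm_num
    have hr42m : |Rex 4 (2*s)| ≤ 16 * (|s| ^ 4 * M ^ 3) := le_trans hR42 (by gcongr)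
    have hr4m : |Rex 4 s| ≤ |s| ^ 4 * M ^ 3 := le_trans hR4 (by gcongr)
    calc |2 * Rex 4 (3*s) - 9 * Rex 4 (2*s) + 18 * Rex 4 s|
        ≤ 2 * |Rex 4 (3*s)| + 9 * |Rex 4 (2*s)| + 18 * |Rex 4 s| := tri
      _ ≤ 2 * (81 * (|s| ^ 4 * M ^ 3)) + 9 * (16 * (|s| ^ 4 * M ^ 3))
            + 18 * (|s| ^ 4 * M ^ 3) := by linarith only [hR43, hr42m, hr4m]
      _ = 324 * (|s| ^ 4 * M ^ 3) := by ring
      _ = 324 * (|γ| ^ 4 * w ^ 4 * M ^ 3) := by rw [habs]; ring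
  have h1γ : (1:ℝ) ≤ 1 + |γ| := by linarith only [abs_nonneg γ]
  have hbig : (1:ℝ) ≤ (1 + |γ|) ^ 2 := le_trans h1γ (le_self_pow₀ h1γ (by norm_num))
  have h400 : (1:ℝ) ≤ 400 * (1 + |γ|) ^ 2 := by linarith only [hbig]
  have h1w6 : (0:ℝ) < (1 + w) ^ 6 := by positivity
  have h1w1 : (1:ℝ) ≤ (1 + w) ^ 6 :=
    le_trans (by linarith : (1:ℝ) ≤ 1 + w) (le_self_pow₀ (by linarith) (by norm_num))
  have hbig400w : (1:ℝ) ≤ 400 * (1 + |γ|) ^ 2 * (1 + w) ^ 6 := by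
    calc (1:ℝ) = 1 * 1 := by norm_num
      _ ≤ (400 * (1 + |γ|) ^ 2) * (1 + w) ^ 6 :=
          mul_le_mul h400 h1w1 zero_le_one (by positivity)
  have hGb : |1 + γ| ≤ 1 + |γ| := by
    calc |1 + γ| ≤ |(1:ℝ)| + |γ| := abs_add_le 1 γ
      _ = 1 + |γ| := by norm_num
  have hG2b : |1 + 2*γ| ≤ 2 * (1 + |γ|) := by
    calc |1 + 2*γ| ≤ |(1:ℝ)| + |2*γ| := abs_add_le 1 (2*γ)
      _ = 1 + 2*|γ| := by rw [abs_mul]; norm_num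
      _ ≤ 2 * (1 + |γ|) := by linarith only [abs_nonneg γ]
  interval_cases n <;> interval_cases i
  · -- (i,n) = (0,1)
    simp only [Fc, hMP, Nat.sub_zero, pow_zero, pow_one, one_mul, mul_one]
    rw [abs_div, abs_mul, abs_of_pos hz0, abs_pow]
    rw [div_le_iff₀ (by positivity)]
    have hkey : w ^ 2 ≤ 400 * (1 + |γ|) ^ 2 * (1 + w) ^ 6 :=
      le_trans (pow_le_pow16 hw0 (by norm_num)) (le_mul_of_one_le_left (le_of_lt h1w6) h400)
    calc zE γ x * |qQ γ x| ≤ zE γ x * (|γ| ^ 2 * w ^ 2 * M) :=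
        mul_le_mul_of_nonneg_left hQb (le_of_lt hz0)
      _ ≤ zE γ x * (|γ| ^ 2 * (400 * (1 + |γ|) ^ 2 * (1 + w) ^ 6) * M) := by
          have := mul_le_mul_of_nonneg_right (mul_le_mul_of_nonneg_left hkey
            (by positivity : (0:ℝ) ≤ |γ| ^ 2)) (by positivity : (0:ℝ) ≤ M)
          exact mul_le_mul_of_nonneg_left this (le_of_lt hz0)
      _ = 400 * (1 + |γ|) ^ 2 * (zE γ x * (1 + w) ^ 6 * M) * |γ| ^ 2 := by ring
  · -- (i,n) = (1,1)
    simp only [Fc, hMP, Nat.sub_self, pow_zero, pow_one, mul_one]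
    rw [abs_neg, abs_mul, abs_of_pos hz0, abs_of_pos hP0]
    calc zE γ x * pI γ x = 1 * (zE γ x * pI γ x) := by ring
      _ ≤ (400 * (1 + |γ|) ^ 2 * (1 + w) ^ 6) * (zE γ x * pI γ x) :=
          mul_le_mul_of_nonneg_right hbig400w (by positivity)
      _ = 400 * (1 + |γ|) ^ 2 * (zE γ x * pI γ x * (1 + w) ^ 6) := by ring
  · -- (i,n) = (0,2)
    simp only [Fc, hMP, Nat.sub_zero, pow_zero, one_mul, mul_one]
    rw [abs_div, abs_mul, abs_of_pos hz0, abs_pow]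
    rw [div_le_iff₀ (by positivity)]
    have hSid : sS γ x = qQ γ x ^ 2 + γ * ((1 - pI γ x) ^ 2 - 2 * qQ γ x) := by
      rw [sS]; ring
    have hNb : |sS γ x| ≤ |γ| ^ 4 * ((w ^ 4 + 12 * w ^ 3) * M ^ 2) := by
      rw [hSid]
      calc |qQ γ x ^ 2 + γ * ((1 - pI γ x) ^ 2 - 2 * qQ γ x)|
          ≤ |qQ γ x| ^ 2 + |γ| * |(1 - pI γ x) ^ 2 - 2 * qQ γ x| := by
            refine le_trans (abs_add_le _ _) ?_
            rw [abs_mul, abs_pow]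
        _ ≤ (|γ| ^ 2 * w ^ 2 * M) ^ 2 + |γ| * (12 * (|γ| ^ 3 * w ^ 3 * M ^ 2)) := by
            gcongr <;> exact abs_nonneg _
        _ = |γ| ^ 4 * ((w ^ 4 + 12 * w ^ 3) * M ^ 2) := by ring
    have hkey : w ^ 4 + 12 * w ^ 3 ≤ 400 * (1 + |γ|) ^ 2 * (1 + w) ^ 6 := by
      have p4 := pow_le_pow16 hw0 (show 4 ≤ 6 by norm_num)
      have p3 := pow_le_pow16 hw0 (show 3 ≤ 6 by norm_num)
      have h13 : w ^ 4 + 12 * w ^ 3 ≤ 13 * (1 + w) ^ 6 := by linarith only [p4, p3]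
      have hc : (13:ℝ) ≤ 400 * (1 + |γ|) ^ 2 := by linarith only [hbig]
      calc w ^ 4 + 12 * w ^ 3 ≤ 13 * (1 + w) ^ 6 := h13
        _ ≤ 400 * (1 + |γ|) ^ 2 * (1 + w) ^ 6 :=
            mul_le_mul_of_nonneg_right hc (by positivity)
    calc zE γ x * |sS γ x| ≤ zE γ x * (|γ| ^ 4 * ((w ^ 4 + 12 * w ^ 3) * M ^ 2)) :=
        mul_le_mul_of_nonneg_left hNb (le_of_lt hz0)
      _ ≤ zE γ x * (|γ| ^ 4 * ((400 * (1 + |γ|) ^ 2 * (1 + w) ^ 6) * M ^ 2)) := by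
          gcongr
      _ = 400 * (1 + |γ|) ^ 2 * (zE γ x * (1 + w) ^ 6 * M ^ 2) * |γ| ^ 4 := by ring
  · -- (i,n) = (1,2)
    simp only [Fc, hMP, pow_one]
    rw [abs_div, abs_mul, abs_mul, abs_of_pos hz0, abs_of_pos hP0, abs_pow]
    rw [div_le_iff₀ (by positivity)]
    have hNb : |γ * (1 - pI γ x) - qQ γ x| ≤ |γ| ^ 2 * ((w + w ^ 2) * M) := by
      calc |γ * (1 - pI γ x) - qQ γ x| ≤ |γ| * |1 - pI γ x| + |qQ γ x| := by
            refine le_trans (abs_sub _ _) ?_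
            rw [abs_mul]
        _ ≤ |γ| * (|γ| * w * M) + |γ| ^ 2 * w ^ 2 * M := by gcongr <;> exact abs_nonneg _
        _ = |γ| ^ 2 * ((w + w ^ 2) * M) := by ring
    have hkey : w + w ^ 2 ≤ 400 * (1 + |γ|) ^ 2 * (1 + w) ^ 6 := by
      have p1 := pow_le_pow16 hw0 (show 1 ≤ 6 by norm_num)
      have p2 := pow_le_pow16 hw0 (show 2 ≤ 6 by norm_num)
      rw [pow_one] at p1
      have h2' : w + w ^ 2 ≤ 2 * (1 + w) ^ 6 := by linarith only [p1, p2]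
      have hc : (2:ℝ) ≤ 400 * (1 + |γ|) ^ 2 := by linarith only [hbig]
      calc w + w ^ 2 ≤ 2 * (1 + w) ^ 6 := h2'
        _ ≤ 400 * (1 + |γ|) ^ 2 * (1 + w) ^ 6 :=
            mul_le_mul_of_nonneg_right hc (by positivity)
    calc zE γ x * pI γ x * |γ * (1 - pI γ x) - qQ γ x|
        ≤ zE γ x * pI γ x * (|γ| ^ 2 * ((w + w ^ 2) * M)) :=
          mul_le_mul_of_nonneg_left hNb (by positivity)
      _ ≤ zE γ x * pI γ x * (|γ| ^ 2 * ((400 * (1 + |γ|) ^ 2 * (1 + w) ^ 6) * M)) := by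
          gcongr
      _ = 400 * (1 + |γ|) ^ 2 * (zE γ x * pI γ x * (1 + w) ^ 6 * M ^ (2 - 1)) * |γ| ^ 2 := by
          norm_num; ring
  · -- (i,n) = (2,2)
    simp only [Fc, hMP, Nat.sub_self, pow_zero, mul_one]
    rw [abs_mul, abs_of_pos (by positivity : (0:ℝ) < zE γ x * pI γ x ^ 2)]
    calc |1 + γ| * (zE γ x * pI γ x ^ 2)
        ≤ (1 + |γ|) * (zE γ x * pI γ x ^ 2) := mul_le_mul_of_nonneg_right hGb (by positivity)
      _ ≤ ((400 * (1 + |γ|) ^ 2) * (1 + w) ^ 6) * (zE γ x * pI γ x ^ 2) := by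
          have hsp : (1 + |γ|) ≤ (1 + |γ|) ^ 2 := le_self_pow₀ h1γ (by norm_num)
          have hc : (1 + |γ|) ≤ 400 * (1 + |γ|) ^ 2 := by linarith only [hsp, hbig]
          have : (1 + |γ|) ≤ (400 * (1 + |γ|) ^ 2) * (1 + w) ^ 6 :=
            le_trans hc (le_mul_of_one_le_right (by positivity) h1w1)
          exact mul_le_mul_of_nonneg_right this (by positivity)
      _ = 400 * (1 + |γ|) ^ 2 * (zE γ x * pI γ x ^ 2 * (1 + w) ^ 6) := by ring
  · -- (i,n) = (0,3)
    simp only [Fc, hMP, Nat.sub_zero, pow_zero, one_mul, mul_one]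
    rw [abs_div, abs_mul, abs_of_pos hz0, abs_pow]
    rw [div_le_iff₀ (by positivity)]
    have hTid : tT γ x = qQ γ x ^ 3 + 3 * γ * (qQ γ x * ((1 - pI γ x) ^ 2 - 2 * qQ γ x))
        + γ ^ 2 * ((1 - pI γ x) ^ 2 * (2 * pI γ x - 1) - 2 * qQ γ x
            - 4 * ((1 - pI γ x) ^ 2 - 2 * qQ γ x)) := by
      rw [tT, sS]; ring
    have hQW : |qQ γ x * ((1 - pI γ x) ^ 2 - 2 * qQ γ x)|
        ≤ (|γ| ^ 2 * w ^ 2 * M) * (12 * (|γ| ^ 3 * w ^ 3 * M ^ 2)) := by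
      rw [abs_mul]
      exact mul_le_mul hQb hWb (abs_nonneg _) (by positivity)
    have hNb : |tT γ x| ≤ |γ| ^ 6 * ((w ^ 6 + 36 * w ^ 5 + 324 * w ^ 4) * M ^ 3) := by
      rw [hTid]
      calc |qQ γ x ^ 3 + 3 * γ * (qQ γ x * ((1 - pI γ x) ^ 2 - 2 * qQ γ x))
          + γ ^ 2 * ((1 - pI γ x) ^ 2 * (2 * pI γ x - 1) - 2 * qQ γ x
              - 4 * ((1 - pI γ x) ^ 2 - 2 * qQ γ x))|
          ≤ |qQ γ x| ^ 3 + 3 * |γ| * |qQ γ x * ((1 - pI γ x) ^ 2 - 2 * qQ γ x)|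
            + |γ| ^ 2 * |(1 - pI γ x) ^ 2 * (2 * pI γ x - 1) - 2 * qQ γ x
              - 4 * ((1 - pI γ x) ^ 2 - 2 * qQ γ x)| := by
            refine le_trans (abs_add_le _ _) ?_
            have := abs_add_le (qQ γ x ^ 3)
              (3 * γ * (qQ γ x * ((1 - pI γ x) ^ 2 - 2 * qQ γ x)))
            rw [abs_pow] at *
            have e1 : |3 * γ * (qQ γ x * ((1 - pI γ x) ^ 2 - 2 * qQ γ x))|
                = 3 * |γ| * |qQ γ x * ((1 - pI γ x) ^ 2 - 2 * qQ γ x)| := by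
              rw [abs_mul, abs_mul]; norm_num
            have e2' : |γ ^ 2 * ((1 - pI γ x) ^ 2 * (2 * pI γ x - 1) - 2 * qQ γ x
                - 4 * ((1 - pI γ x) ^ 2 - 2 * qQ γ x))|
                = |γ| ^ 2 * |(1 - pI γ x) ^ 2 * (2 * pI γ x - 1) - 2 * qQ γ x
                - 4 * ((1 - pI γ x) ^ 2 - 2 * qQ γ x)| := by
              rw [abs_mul, abs_pow]
            rw [e1] at this
            rw [e2']
            linarith
        _ ≤ (|γ| ^ 2 * w ^ 2 * M) ^ 3
            + 3 * |γ| * ((|γ| ^ 2 * w ^ 2 * M) * (12 * (|γ| ^ 3 * w ^ 3 * M ^ 2)))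
            + |γ| ^ 2 * (324 * (|γ| ^ 4 * w ^ 4 * M ^ 3)) := by
            gcongr <;> exact abs_nonneg _
        _ = |γ| ^ 6 * ((w ^ 6 + 36 * w ^ 5 + 324 * w ^ 4) * M ^ 3) := by ring
    have hkey : w ^ 6 + 36 * w ^ 5 + 324 * w ^ 4 ≤ 400 * (1 + |γ|) ^ 2 * (1 + w) ^ 6 := by
      have p6 := pow_le_pow16 hw0 (show 6 ≤ 6 by norm_num)
      have p5 := pow_le_pow16 hw0 (show 5 ≤ 6 by norm_num)
      have p4 := pow_le_pow16 hw0 (show 4 ≤ 6 by norm_num)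
      have h361 : w ^ 6 + 36 * w ^ 5 + 324 * w ^ 4 ≤ 361 * (1 + w) ^ 6 := by
        linarith only [p6, p5, p4]
      have hc : (361:ℝ) ≤ 400 * (1 + |γ|) ^ 2 := by linarith only [hbig]
      calc w ^ 6 + 36 * w ^ 5 + 324 * w ^ 4 ≤ 361 * (1 + w) ^ 6 := h361
        _ ≤ 400 * (1 + |γ|) ^ 2 * (1 + w) ^ 6 :=
            mul_le_mul_of_nonneg_right hc (by positivity)
    calc zE γ x * |tT γ x|
        ≤ zE γ x * (|γ| ^ 6 * ((w ^ 6 + 36 * w ^ 5 + 324 * w ^ 4) * M ^ 3)) :=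
          mul_le_mul_of_nonneg_left hNb (le_of_lt hz0)
      _ ≤ zE γ x * (|γ| ^ 6 * ((400 * (1 + |γ|) ^ 2 * (1 + w) ^ 6) * M ^ 3)) := by gcongr
      _ = 400 * (1 + |γ|) ^ 2 * (zE γ x * (1 + w) ^ 6 * M ^ 3) * |γ| ^ 6 := by ring
  · -- (i,n) = (1,3)
    simp only [Fc, hMP, pow_one]
    rw [abs_div, abs_mul, abs_mul, abs_of_pos hz0, abs_of_pos hP0, abs_pow]
    rw [div_le_iff₀ (by positivity)]
    have hNid : -qQ γ x ^ 2 + 2 * γ * qQ γ x * (2 - pI γ x)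
        - (γ + 2 * γ ^ 2) * (1 - pI γ x) ^ 2
        = -(qQ γ x ^ 2) + γ * (4 * qQ γ x - 2 * qQ γ x * pI γ x - (1 - pI γ x) ^ 2)
          - 2 * γ ^ 2 * (1 - pI γ x) ^ 2 := by ring
    have hNb : |(-qQ γ x ^ 2 + 2 * γ * qQ γ x * (2 - pI γ x)
        - (γ + 2 * γ ^ 2) * (1 - pI γ x) ^ 2)|
        ≤ |γ| ^ 4 * ((w ^ 4 + 34 * w ^ 3 + 2 * w ^ 2) * M ^ 2) := by
      rw [hNid]
      calc |(-(qQ γ x ^ 2) + γ * (4 * qQ γ x - 2 * qQ γ x * pI γ x - (1 - pI γ x) ^ 2)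
          - 2 * γ ^ 2 * (1 - pI γ x) ^ 2)|
          ≤ |qQ γ x| ^ 2 + |γ| * |4 * qQ γ x - 2 * qQ γ x * pI γ x - (1 - pI γ x) ^ 2|
            + 2 * |γ| ^ 2 * |1 - pI γ x| ^ 2 := by
            have t1 := abs_add_le (-(qQ γ x ^ 2))
              (γ * (4 * qQ γ x - 2 * qQ γ x * pI γ x - (1 - pI γ x) ^ 2))
            have t2 := abs_sub (-(qQ γ x ^ 2)
              + γ * (4 * qQ γ x - 2 * qQ γ x * pI γ x - (1 - pI γ x) ^ 2))
              (2 * γ ^ 2 * (1 - pI γ x) ^ 2)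
            rw [abs_neg, abs_pow] at t1
            have e1 : |γ * (4 * qQ γ x - 2 * qQ γ x * pI γ x - (1 - pI γ x) ^ 2)|
                = |γ| * |4 * qQ γ x - 2 * qQ γ x * pI γ x - (1 - pI γ x) ^ 2| := abs_mul _ _
            have e2' : |2 * γ ^ 2 * (1 - pI γ x) ^ 2|
                = 2 * |γ| ^ 2 * |1 - pI γ x| ^ 2 := by
              rw [abs_mul, abs_mul, abs_pow, abs_pow]; norm_num
            rw [e1] at t1; rw [e2'] at t2
            linarith
        _ ≤ (|γ| ^ 2 * w ^ 2 * M) ^ 2 + |γ| * (34 * (|γ| ^ 3 * w ^ 3 * M ^ 2))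
            + 2 * |γ| ^ 2 * (|γ| * w * M) ^ 2 := by
            gcongr <;> exact abs_nonneg _
        _ = |γ| ^ 4 * ((w ^ 4 + 34 * w ^ 3 + 2 * w ^ 2) * M ^ 2) := by ring
    have hkey : w ^ 4 + 34 * w ^ 3 + 2 * w ^ 2 ≤ 400 * (1 + |γ|) ^ 2 * (1 + w) ^ 6 := by
      have p4 := pow_le_pow16 hw0 (show 4 ≤ 6 by norm_num)
      have p3 := pow_le_pow16 hw0 (show 3 ≤ 6 by norm_num)
      have p2 := pow_le_pow16 hw0 (show 2 ≤ 6 by norm_num)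
      have h37 : w ^ 4 + 34 * w ^ 3 + 2 * w ^ 2 ≤ 37 * (1 + w) ^ 6 := by
        linarith only [p4, p3, p2]
      have hc : (37:ℝ) ≤ 400 * (1 + |γ|) ^ 2 := by linarith only [hbig]
      calc w ^ 4 + 34 * w ^ 3 + 2 * w ^ 2 ≤ 37 * (1 + w) ^ 6 := h37
        _ ≤ 400 * (1 + |γ|) ^ 2 * (1 + w) ^ 6 :=
            mul_le_mul_of_nonneg_right hc (by positivity)
    calc zE γ x * pI γ x * |(-qQ γ x ^ 2 + 2 * γ * qQ γ x * (2 - pI γ x)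
          - (γ + 2 * γ ^ 2) * (1 - pI γ x) ^ 2)|
        ≤ zE γ x * pI γ x * (|γ| ^ 4 * ((w ^ 4 + 34 * w ^ 3 + 2 * w ^ 2) * M ^ 2)) :=
          mul_le_mul_of_nonneg_left hNb (by positivity)
      _ ≤ zE γ x * pI γ x * (|γ| ^ 4 * ((400 * (1 + |γ|) ^ 2 * (1 + w) ^ 6) * M ^ 2)) := by
          gcongr
      _ = 400 * (1 + |γ|) ^ 2 * (zE γ x * pI γ x * (1 + w) ^ 6 * M ^ (3 - 1)) * |γ| ^ 4 := by
          norm_num; ring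
  · -- (i,n) = (2,3)
    simp only [Fc, hMP]
    rw [abs_div, abs_mul, abs_mul, abs_of_pos hz0, abs_of_pos (pow_pos hP0 2), abs_pow]
    rw [div_le_iff₀ (by positivity)]
    have hNb : |(1 + γ) * qQ γ x - 2 * γ * (1 + γ) * (1 - pI γ x) + γ ^ 2|
        ≤ |γ| ^ 2 * ((1 + |γ|) * (w ^ 2 + 2 * w + 1) * M) := by
      calc |(1 + γ) * qQ γ x - 2 * γ * (1 + γ) * (1 - pI γ x) + γ ^ 2|
          ≤ |1 + γ| * |qQ γ x| + 2 * |γ| * |1 + γ| * |1 - pI γ x| + |γ| ^ 2 := by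
            have t1 := abs_add_le ((1 + γ) * qQ γ x - 2 * γ * (1 + γ) * (1 - pI γ x)) (γ ^ 2)
            have t2 := abs_sub ((1 + γ) * qQ γ x) (2 * γ * (1 + γ) * (1 - pI γ x))
            have e1 : |(1 + γ) * qQ γ x| = |1 + γ| * |qQ γ x| := abs_mul _ _
            have e2' : |2 * γ * (1 + γ) * (1 - pI γ x)|
                = 2 * |γ| * |1 + γ| * |1 - pI γ x| := by
              rw [abs_mul, abs_mul, abs_mul]; norm_num
            have e3' : |γ ^ 2| = |γ| ^ 2 := abs_pow γ 2
            rw [e1, e2'] at t2; rw [e3'] at t1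
            linarith
        _ ≤ (1 + |γ|) * (|γ| ^ 2 * w ^ 2 * M) + 2 * |γ| * (1 + |γ|) * (|γ| * w * M)
            + |γ| ^ 2 := by
            gcongr <;> exact abs_nonneg _
        _ ≤ |γ| ^ 2 * ((1 + |γ|) * (w ^ 2 + 2 * w + 1) * M) := by
            have hgm : (1:ℝ) ≤ (1 + |γ|) * M :=
              le_trans h1γ (le_mul_of_one_le_right (by positivity) hM1)
            have h3 : |γ| ^ 2 ≤ |γ| ^ 2 * ((1 + |γ|) * M) :=
              le_mul_of_one_le_right (by positivity) hgm
            linarith only [h3]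
    have hkey : (1 + |γ|) * (w ^ 2 + 2 * w + 1) ≤ 400 * (1 + |γ|) ^ 2 * (1 + w) ^ 6 := by
      have e : (1 + w) ^ 2 = w ^ 2 + 2 * w + 1 := by ring
      have hsq : w ^ 2 + 2 * w + 1 ≤ (1 + w) ^ 6 :=
        e ▸ pow_le_pow_right₀ (by linarith only [hw0]) (by norm_num)
      have hsp : (1 + |γ|) ≤ (1 + |γ|) ^ 2 := le_self_pow₀ h1γ (by norm_num)
      have hc : (1 + |γ|) ≤ 400 * (1 + |γ|) ^ 2 := by linarith only [hsp, hbig]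
      calc (1 + |γ|) * (w ^ 2 + 2 * w + 1) ≤ (1 + |γ|) * (1 + w) ^ 6 :=
            mul_le_mul_of_nonneg_left hsq (by positivity)
        _ ≤ (400 * (1 + |γ|) ^ 2) * (1 + w) ^ 6 :=
            mul_le_mul_of_nonneg_right hc (by positivity)
    calc zE γ x * pI γ x ^ 2 * |(1 + γ) * qQ γ x - 2 * γ * (1 + γ) * (1 - pI γ x) + γ ^ 2|
        ≤ zE γ x * pI γ x ^ 2 * (|γ| ^ 2 * ((1 + |γ|) * (w ^ 2 + 2 * w + 1) * M)) :=
          mul_le_mul_of_nonneg_left hNb (by positivity)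
      _ ≤ zE γ x * pI γ x ^ 2 * (|γ| ^ 2 * ((400 * (1 + |γ|) ^ 2 * (1 + w) ^ 6) * M)) := by
          gcongr
      _ = 400 * (1 + |γ|) ^ 2 * (zE γ x * pI γ x ^ 2 * (1 + w) ^ 6 * M ^ (3 - 2)) * |γ| ^ 2 := by
          norm_num; ring
  · -- (i,n) = (3,3)
    simp only [Fc, hMP, Nat.sub_self, pow_zero, mul_one]
    rw [abs_neg, abs_mul, abs_mul,
      abs_of_pos (by positivity : (0:ℝ) < zE γ x * pI γ x ^ 3)]
    calc |1 + γ| * |1 + 2*γ| * (zE γ x * pI γ x ^ 3)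
        ≤ ((1 + |γ|) * (2 * (1 + |γ|))) * (zE γ x * pI γ x ^ 3) := by
          apply mul_le_mul_of_nonneg_right _ (by positivity)
          exact mul_le_mul hGb hG2b (abs_nonneg _) (by positivity)
      _ ≤ ((400 * (1 + |γ|) ^ 2) * (1 + w) ^ 6) * (zE γ x * pI γ x ^ 3) := by
          apply mul_le_mul_of_nonneg_right _ (by positivity)
          have e : (1 + |γ|) * (2 * (1 + |γ|)) = 2 * (1 + |γ|) ^ 2 := by ring
          have hX0 : (0:ℝ) ≤ (1 + |γ|) ^ 2 := by positivity
          have hc : (1 + |γ|) * (2 * (1 + |γ|)) ≤ 400 * (1 + |γ|) ^ 2 := by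
            rw [e]; linarith only [hX0]
          exact le_trans hc (le_mul_of_one_le_right (by positivity) h1w1)
      _ = 400 * (1 + |γ|) ^ 2 * (zE γ x * pI γ x ^ 3 * (1 + w) ^ 6) := by ring



lemma max_one_pow {a : ℝ} (ha : 0 ≤ a) (k : ℕ) : (max 1 a) ^ k = max 1 (a ^ k) := by
  rcases le_total a 1 with h | h
  · rw [max_eq_left h, one_pow, max_eq_left (pow_le_one₀ ha h)]
  · have h1 : (1:ℝ) ≤ a ^ k := by
      calc (1:ℝ) = 1 ^ k := (one_pow k).symm
        _ ≤ a ^ k := pow_le_pow_left₀ zero_le_one h k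
    rw [max_eq_right h, max_eq_right h1]
lemma one_add_le_exp_eps {ε t : ℝ} (hε : 0 < ε) (ht : 0 ≤ t) :
    (1 + t) ^ 6 ≤ (1 + 12/ε) ^ 6 * Real.exp ((ε/2) * t) := by
  have hc : (0:ℝ) < 1 + 12/ε := by positivity
  have h12 : (1:ℝ) ≤ 12/ε * (ε/12) := by
    rw [div_mul_div_comm]
    rw [show (12:ℝ) * ε / (ε * 12) = ε/ε * (12/12) by ring]
    rw [div_self (ne_of_gt hε)]; norm_num
  have h1 : 1 + t ≤ (1 + 12/ε) * (1 + (ε/12) * t) := by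
    have e : (1 + 12/ε) * (1 + (ε/12) * t) = 1 + 12/ε + (ε/12)*t + (12/ε * (ε/12))*t := by ring
    have h2 : (0:ℝ) ≤ (ε/12)*t := by positivity
    have h3 : (0:ℝ) ≤ 12/ε := by positivity
    have h4 : t ≤ (12/ε * (ε/12))*t := le_mul_of_one_le_left ht h12
    rw [e]; linarith only [h2, h3, h4]
  have h2 : 1 + (ε/12)*t ≤ Real.exp ((ε/12)*t) := by
    have := Real.add_one_le_exp ((ε/12)*t)
    linarith only [this]
  calc (1+t)^6 ≤ ((1 + 12/ε) * Real.exp ((ε/12)*t))^6 :=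
      pow_le_pow_left₀ (by positivity)
        (le_trans h1 (mul_le_mul_of_nonneg_left h2 hc.le)) 6
    _ = (1 + 12/ε)^6 * Real.exp ((ε/2) * t) := by
        rw [mul_pow, ← Real.exp_nat_mul]
        congr 1
        ring

lemma exp_le_max4 {ε γ γ₀ : ℝ} (v : ℝ) (hε : 0 < ε) (j : ℝ) (hj0 : 0 ≤ j) (hj3 : j ≤ 3)
    (hγδ : |γ - γ₀| ≤ ε/6) :
    Real.exp ((1 + j*γ) * v) * Real.exp ((ε/2) * |v|) ≤
      max (Real.exp ((1 + j*γ₀ - ε) * v)) (Real.exp ((1 + j*γ₀ + ε) * v)) := by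
  rw [← Real.exp_add]
  have hkey : j*(γ-γ₀)*v ≤ (ε/2) * |v| := by
    calc j*(γ-γ₀)*v ≤ |j*(γ-γ₀)*v| := le_abs_self _
      _ = j * |γ-γ₀| * |v| := by rw [abs_mul, abs_mul, abs_of_nonneg hj0]
      _ ≤ 3 * (ε/6) * |v| := by
          have := mul_le_mul (mul_le_mul hj3 hγδ (abs_nonneg _) (by norm_num))
            (le_refl |v|) (abs_nonneg v) (by positivity)
          exact this
      _ = (ε/2) * |v| := by ring
  rcases le_or_gt 0 v with hv | hv
  · rw [abs_of_nonneg hv] at hkey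
    refine le_max_of_le_right (Real.exp_le_exp.mpr ?_)
    rw [abs_of_nonneg hv]
    nlinarith only [hkey]
  · rw [abs_of_neg hv] at hkey
    refine le_max_of_le_left (Real.exp_le_exp.mpr ?_)
    rw [abs_of_neg hv]
    nlinarith only [hkey]


/-- **Lemma 5 (bounds on the derivatives of `z(γ,x) = (1+γx)^{-1/γ}`)**: for every
`γ₀ ∈ ℝ` and `ε > 0` there are `C > 0`, `δ > 0` such that for all
`γ ∈ (γ₀-δ, γ₀+δ)`, `γ ≠ 0`, all `x` with `1 + γx > 0`, and every mixed partial
derivative of order `n ∈ {1,2,3}` with `i` derivatives in `x`,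
`|∂ⁿz/∂xⁱ∂γ^{n-i}| ≤ C max(z^{1+iγ₀-ε}, z^{1+iγ₀+ε}, z^{1+nγ₀-ε}, z^{1+nγ₀+ε})`. -/
theorem zfun_derivative_bounds (γ₀ ε : ℝ) (hε : 0 < ε) :
    ∃ C > (0:ℝ), ∃ δ > (0:ℝ), ∀ γ ∈ Set.Ioo (γ₀ - δ) (γ₀ + δ), γ ≠ 0 →
      ∀ x : ℝ, 0 < 1 + γ * x →
      ∀ L : List Bool, 1 ≤ L.length → L.length ≤ 3 →
        |mixedDeriv L zfun γ x| ≤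
          C * max (max (zfun γ x ^ (1 + (L.count true : ℝ) * γ₀ - ε))
                       (zfun γ x ^ (1 + (L.count true : ℝ) * γ₀ + ε)))
                  (max (zfun γ x ^ (1 + (L.length : ℝ) * γ₀ - ε))
                       (zfun γ x ^ (1 + (L.length : ℝ) * γ₀ + ε))) := by
  refine ⟨400 * (2 + |γ₀|) ^ 2 * (1 + 12/ε) ^ 6, by positivity,
    min (ε/6) 1, by positivity, ?_⟩
  intro γ hγmem hγ x hu L hL1 hL3
  have hlt : |γ - γ₀| < min (ε/6) 1 := by
    rcases hγmem with ⟨h1, h2⟩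
    rw [abs_sub_lt_iff]
    constructor <;> linarith only [h1, h2]
  have hδε : |γ - γ₀| ≤ ε/6 := le_trans hlt.le (min_le_left _ _)
  have hδ1 : |γ - γ₀| ≤ 1 := le_trans hlt.le (min_le_right _ _)
  have hγb : 1 + |γ| ≤ 2 + |γ₀| := by
    have := abs_sub_abs_le_abs_sub γ γ₀
    linarith only [this, hδ1]
  have hι : L.count true ≤ L.length := List.count_le_length
  rw [mixedDeriv_zfun_eq L hL3 hγ hu]
  refine le_trans (Fc_bound _ _ hι hL1 hL3 hγ hu) ?_
  set i := L.count true with hidef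
  set n := L.length with hndef
  set v : ℝ := -Real.log (1 + γ * x) / γ with hv
  have hzE : zE γ x = Real.exp v := rfl
  have hzfun : ∀ a : ℝ, zfun γ x ^ a = Real.exp (a * v) := by
    intro a
    have h0 : zfun γ x = Real.exp v := by
      rw [zfun, Real.rpow_def_of_pos hu, hv]
      congr 1
      ring
    rw [h0, Real.rpow_def_of_pos (Real.exp_pos v), Real.log_exp]
    congr 1
    ring
  have hγv : γ * v = -Real.log (1 + γ * x) := by rw [hv]; field_simp
  have hpI : pI γ x = Real.exp (γ * v) := by
    rw [pI, hγv, Real.exp_neg, Real.exp_log hu]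
  have hwv : |Real.log (1 + γ * x) / γ| = |v| := by rw [hv, neg_div, abs_neg]
  have hEi : zE γ x * pI γ x ^ i = Real.exp ((1 + (i:ℝ) * γ) * v) := by
    rw [hzE, hpI, ← Real.exp_nat_mul, ← Real.exp_add]
    congr 1
    ring
  have hMni : max 1 (pI γ x) ^ (n - i)
      = max 1 (Real.exp (((n - i : ℕ) : ℝ) * (γ * v))) := by
    rw [hpI, max_one_pow (Real.exp_nonneg _), ← Real.exp_nat_mul]
  have hsplit : Real.exp ((1 + (i:ℝ)*γ)*v) * max 1 (Real.exp (((n-i : ℕ):ℝ) * (γ*v)))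
      = max (Real.exp ((1 + (i:ℝ)*γ)*v)) (Real.exp ((1 + (n:ℝ)*γ)*v)) := by
    rw [mul_max_of_nonneg _ _ (Real.exp_nonneg _), mul_one, ← Real.exp_add]
    congr 2
    rw [Nat.cast_sub hι]
    ring
  have hi3 : (i:ℝ) ≤ 3 := by
    have : i ≤ 3 := le_trans hι hL3
    exact_mod_cast this
  have hn3 : (n:ℝ) ≤ 3 := by exact_mod_cast hL3
  have hmax0 : (0:ℝ) ≤ max (Real.exp ((1 + (i:ℝ)*γ)*v)) (Real.exp ((1 + (n:ℝ)*γ)*v)) :=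
    le_trans (Real.exp_nonneg _) (le_max_left _ _)
  calc 400 * (1 + |γ|) ^ 2 * (zE γ x * pI γ x ^ i
        * (1 + |Real.log (1 + γ * x) / γ|) ^ 6 * max 1 (pI γ x) ^ (n - i))
      = 400 * (1 + |γ|) ^ 2 * ((1 + |v|) ^ 6
          * max (Real.exp ((1 + (i:ℝ)*γ)*v)) (Real.exp ((1 + (n:ℝ)*γ)*v))) := by
        rw [hwv, show zE γ x * pI γ x ^ i * (1 + |v|) ^ 6 * max 1 (pI γ x) ^ (n - i)
            = (1 + |v|) ^ 6 * (zE γ x * pI γ x ^ i * max 1 (pI γ x) ^ (n - i)) from by ring,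
          hEi, hMni, hsplit]
    _ ≤ 400 * (1 + |γ|) ^ 2 * (((1 + 12/ε) ^ 6 * Real.exp ((ε/2) * |v|))
          * max (Real.exp ((1 + (i:ℝ)*γ)*v)) (Real.exp ((1 + (n:ℝ)*γ)*v))) := by
        apply mul_le_mul_of_nonneg_left _ (by positivity)
        exact mul_le_mul_of_nonneg_right (one_add_le_exp_eps hε (abs_nonneg v)) hmax0
    _ = (400 * (1 + |γ|) ^ 2 * (1 + 12/ε) ^ 6)
          * max (Real.exp ((1 + (i:ℝ)*γ)*v) * Real.exp ((ε/2) * |v|))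
                (Real.exp ((1 + (n:ℝ)*γ)*v) * Real.exp ((ε/2) * |v|)) := by
        rw [show 400 * (1 + |γ|) ^ 2 * (((1 + 12/ε) ^ 6 * Real.exp ((ε/2) * |v|))
              * max (Real.exp ((1 + (i:ℝ)*γ)*v)) (Real.exp ((1 + (n:ℝ)*γ)*v)))
            = (400 * (1 + |γ|) ^ 2 * (1 + 12/ε) ^ 6)
              * (max (Real.exp ((1 + (i:ℝ)*γ)*v)) (Real.exp ((1 + (n:ℝ)*γ)*v))
                * Real.exp ((ε/2) * |v|)) from by ring,
          max_mul_of_nonneg _ _ (Real.exp_nonneg _)]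
    _ ≤ (400 * (2 + |γ₀|) ^ 2 * (1 + 12/ε) ^ 6)
          * max (max (Real.exp ((1 + (i:ℝ)*γ₀ - ε)*v)) (Real.exp ((1 + (i:ℝ)*γ₀ + ε)*v)))
                (max (Real.exp ((1 + (n:ℝ)*γ₀ - ε)*v)) (Real.exp ((1 + (n:ℝ)*γ₀ + ε)*v))) := by
        apply mul_le_mul
        · have h2 : (1 + |γ|) ^ 2 ≤ (2 + |γ₀|) ^ 2 :=
            pow_le_pow_left₀ (by positivity) hγb 2
          have h6 : (0:ℝ) ≤ (1 + 12/ε) ^ 6 := by positivity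
          apply mul_le_mul_of_nonneg_right _ h6
          linarith only [h2]
        · exact max_le_max
            (exp_le_max4 v hε (i:ℝ) (by positivity) hi3 hδε)
            (exp_le_max4 v hε (n:ℝ) (by positivity) hn3 hδε)
        · exact le_trans (mul_nonneg (Real.exp_nonneg _) (Real.exp_nonneg _))
            (le_max_left _ _)
        · positivity
    _ = 400 * (2 + |γ₀|) ^ 2 * (1 + 12/ε) ^ 6
          * max (max (zfun γ x ^ (1 + (i : ℝ) * γ₀ - ε))
                     (zfun γ x ^ (1 + (i : ℝ) * γ₀ + ε)))
                (max (zfun γ x ^ (1 + (n : ℝ) * γ₀ - ε))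
                     (zfun γ x ^ (1 + (n : ℝ) * γ₀ + ε))) := by
        rw [hzfun, hzfun, hzfun, hzfun]


end BMMLE
end
end

section
/- Uniform bound on the second-order function along the exponential reparametrization: for every γ0 ∈ ℝ, ρ ≤ 0 and ε > 0 there exists C > 0 such that for all s ∈ (0,1), |H_{γ0,ρ}(1/(−log s))| ≤ C · s^{−ε} · (1−s)^{min(−γ0,0)−ε}, where H_{γ0,ρ}(x) = ∫_1^x t^{γ0−1} ( ∫_1^t u^{ρ−1} du ) dt for x > 0. -/
open MeasureTheory ProbabilityTheory Filter Real Topology Matrix Set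

noncomputable section

namespace BMMLE

open intervalIntegral in
lemma rpow_intable {a b c : ℝ} (ha : 0 < a) (hb : 0 < b) :
    IntervalIntegrable (fun t : ℝ => t ^ c) volume a b := by
  apply ContinuousOn.intervalIntegrable
  apply ContinuousOn.rpow_const continuousOn_id
  intro t ht
  left
  rcases le_total a b with h | h
  · rw [uIcc_of_le h] at ht; exact (lt_of_lt_of_le ha ht.1).ne'
  · rw [uIcc_of_ge h] at ht; exact (lt_of_lt_of_le hb ht.1).ne'

lemma Hso_bound_ge_one (γ ρ ε x : ℝ) (hρ : ρ ≤ 0) (hε : 0 < ε) (hx : 1 ≤ x) :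
    |Hso γ ρ x| ≤ x ^ (max γ 0 + ε) / ε ^ 2 := by
  have hx0 : (0:ℝ) < x := lt_of_lt_of_le one_pos hx
  set c := max γ 0 + ε with hc
  have hcε : ε ≤ c := by simp [hc, le_max_right]
  have hc0 : 0 < c := lt_of_lt_of_le hε hcε
  -- inner bounds
  have hinner_nonneg : ∀ t ∈ Icc (1:ℝ) x, 0 ≤ ∫ u in (1:ℝ)..t, u ^ (ρ - 1) := by
    intro t ht
    exact intervalIntegral.integral_nonneg ht.1 (fun u hu => Real.rpow_nonneg (by linarith [hu.1]) _)
  have hinner_le : ∀ t ∈ Icc (1:ℝ) x, (∫ u in (1:ℝ)..t, u ^ (ρ - 1)) ≤ t ^ ε / ε := by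
    intro t ht
    have ht0 : (0:ℝ) < t := lt_of_lt_of_le one_pos ht.1
    have h1 : (∫ u in (1:ℝ)..t, u ^ (ρ - 1)) ≤ ∫ u in (1:ℝ)..t, u ^ (ε - 1) := by
      apply intervalIntegral.integral_mono_on ht.1 (rpow_intable one_pos ht0)
        (rpow_intable one_pos ht0)
      intro u hu
      exact Real.rpow_le_rpow_of_exponent_le hu.1 (by linarith)
    have h2 : (∫ u in (1:ℝ)..t, u ^ (ε - 1)) = (t ^ ε - 1) / ε := by
      rw [integral_rpow (Or.inr ⟨by linarith, by
        rw [uIcc_of_le ht.1]; rintro ⟨h, -⟩; linarith⟩)]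
      norm_num
    have h3 : (1:ℝ) ≤ t ^ ε := Real.one_le_rpow ht.1 hε.le
    calc (∫ u in (1:ℝ)..t, u ^ (ρ - 1)) ≤ (t ^ ε - 1) / ε := h2 ▸ h1
      _ ≤ t ^ ε / ε := by gcongr; linarith
  -- integrability of the integrand
  have hFcont : ContinuousOn (fun t : ℝ => t ^ (γ - 1) * ∫ u in (1:ℝ)..t, u ^ (ρ - 1))
      (Icc (1:ℝ) x) := by
    apply ContinuousOn.mul
    · apply ContinuousOn.rpow_const continuousOn_id
      intro t ht; left; exact (lt_of_lt_of_le one_pos ht.1).ne'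
    · have := intervalIntegral.continuousOn_primitive_interval (a := (1:ℝ)) (b := x)
        (f := fun u : ℝ => u ^ (ρ - 1)) (μ := volume) ?_
      · rwa [uIcc_of_le hx] at this
      · rw [uIcc_of_le hx]
        apply ContinuousOn.integrableOn_Icc
        apply ContinuousOn.rpow_const continuousOn_id
        intro t ht; left; exact (lt_of_lt_of_le one_pos ht.1).ne'
  have hFint : IntervalIntegrable (fun t : ℝ => t ^ (γ - 1) * ∫ u in (1:ℝ)..t, u ^ (ρ - 1))
      volume 1 x := (hFcont.mono (by rw [uIcc_of_le hx])).intervalIntegrable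
  -- nonnegativity
  have hH0 : 0 ≤ Hso γ ρ x := by
    apply intervalIntegral.integral_nonneg hx
    intro t ht
    exact mul_nonneg (Real.rpow_nonneg (by linarith [ht.1]) _) (hinner_nonneg t ht)
  rw [abs_of_nonneg hH0]
  have key : Hso γ ρ x ≤ ∫ t in (1:ℝ)..x, t ^ (c - 1) / ε := by
    apply intervalIntegral.integral_mono_on hx hFint ((rpow_intable one_pos hx0).div_const ε)
    intro t ht
    have ht0 : (0:ℝ) < t := lt_of_lt_of_le one_pos ht.1
    calc t ^ (γ - 1) * ∫ u in (1:ℝ)..t, u ^ (ρ - 1)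
        ≤ t ^ (γ - 1) * (t ^ ε / ε) :=
          mul_le_mul_of_nonneg_left (hinner_le t ht) (Real.rpow_nonneg ht0.le _)
      _ = t ^ (γ - 1 + ε) / ε := by
          rw [Real.rpow_add ht0]; ring
      _ ≤ t ^ (c - 1) / ε := by
          have h := Real.rpow_le_rpow_of_exponent_le ht.1
            (show γ - 1 + ε ≤ c - 1 by rw [hc]; linarith [le_max_left γ 0])
          exact (div_le_div_iff_of_pos_right hε).mpr h

  have hval : (∫ t in (1:ℝ)..x, t ^ (c - 1) / ε) = (x ^ c - 1) / c / ε := by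
    rw [intervalIntegral.integral_div, integral_rpow (Or.inr ⟨by linarith, by
      rw [uIcc_of_le hx]; rintro ⟨h, -⟩; linarith⟩)]
    norm_num
  have hxc : (0:ℝ) ≤ x ^ c := Real.rpow_nonneg hx0.le _
  calc Hso γ ρ x ≤ (x ^ c - 1) / c / ε := hval ▸ key
    _ ≤ x ^ c / c / ε := by gcongr; linarith
    _ ≤ x ^ c / ε ^ 2 := by
        rw [div_div, sq]
        gcongr <;> nlinarith


lemma Hso_bound_le_one (γ ρ ε x : ℝ) (hρ : ρ ≤ 0) (hε : 0 < ε) (hx0 : 0 < x) (hx : x ≤ 1) :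
    |Hso γ ρ x| ≤ x ^ (min (γ + ρ) 0 - ε) / ε ^ 2 := by
  set c := min (γ + ρ) 0 - ε with hc
  have hcε : c ≤ -ε := by rw [hc]; linarith [min_le_right (γ + ρ) 0]
  have hc0 : c < 0 := lt_of_le_of_lt hcε (by linarith)
  -- rewrite as integral over x..1
  have hrw : Hso γ ρ x = ∫ t in x..(1:ℝ), t ^ (γ - 1) * ∫ u in t..(1:ℝ), u ^ (ρ - 1) := by
    rw [Hso, intervalIntegral.integral_symm, ← intervalIntegral.integral_neg]
    congr 1
    funext t
    rw [intervalIntegral.integral_symm]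
    ring
  have hinner_nonneg : ∀ t ∈ Icc x 1, 0 ≤ ∫ u in t..(1:ℝ), u ^ (ρ - 1) := by
    intro t ht
    exact intervalIntegral.integral_nonneg ht.2
      (fun u hu => Real.rpow_nonneg (le_trans (le_trans hx0.le ht.1) hu.1) _)
  have hinner_le : ∀ t ∈ Icc x 1, (∫ u in t..(1:ℝ), u ^ (ρ - 1)) ≤ t ^ (ρ - ε) / ε := by
    intro t ht
    have ht0 : (0:ℝ) < t := lt_of_lt_of_le hx0 ht.1
    have h1 : (∫ u in t..(1:ℝ), u ^ (ρ - 1)) ≤ ∫ u in t..(1:ℝ), u ^ (ρ - ε - 1) := by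
      apply intervalIntegral.integral_mono_on ht.2 (rpow_intable ht0 one_pos)
        (rpow_intable ht0 one_pos)
      intro u hu
      have hu0 : 0 < u := lt_of_lt_of_le ht0 hu.1
      exact Real.rpow_le_rpow_of_exponent_ge hu0 hu.2 (by linarith)
    have h2 : (∫ u in t..(1:ℝ), u ^ (ρ - ε - 1)) = (1 - t ^ (ρ - ε)) / (ρ - ε) := by
      rw [integral_rpow (Or.inr ⟨by intro h; rw [sub_eq_neg_self] at h; linarith, by
        rw [uIcc_of_le ht.2]; rintro ⟨h, -⟩; linarith⟩)]
      rw [show ρ - ε - 1 + 1 = ρ - ε by ring, Real.one_rpow]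
    have h3 : (0:ℝ) ≤ t ^ (ρ - ε) := Real.rpow_nonneg ht0.le _
    have h4 : (1 - t ^ (ρ - ε)) / (ρ - ε) = (t ^ (ρ - ε) - 1) / (ε - ρ) := by
      rw [div_eq_div_iff (by linarith) (by linarith)]; ring
    calc (∫ u in t..(1:ℝ), u ^ (ρ - 1)) ≤ (t ^ (ρ - ε) - 1) / (ε - ρ) := by rw [← h4, ← h2]; exact h1
      _ ≤ t ^ (ρ - ε) / (ε - ρ) := by
          apply (div_le_div_iff_of_pos_right (by linarith)).mpr; linarith
      _ ≤ t ^ (ρ - ε) / ε := by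
          apply div_le_div_of_nonneg_left h3 hε (by linarith)
  -- integrability of the integrand
  have hFcont : ContinuousOn (fun t : ℝ => t ^ (γ - 1) * ∫ u in t..(1:ℝ), u ^ (ρ - 1))
      (Icc x 1) := by
    apply ContinuousOn.mul
    · apply ContinuousOn.rpow_const continuousOn_id
      intro t ht; left; exact (lt_of_lt_of_le hx0 ht.1).ne'
    · have := intervalIntegral.continuousOn_primitive_interval_left (a := x) (b := (1:ℝ))
        (f := fun u : ℝ => u ^ (ρ - 1)) (μ := volume) ?_
      · rwa [uIcc_of_le hx] at this
      · rw [uIcc_of_le hx]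
        apply ContinuousOn.integrableOn_Icc
        apply ContinuousOn.rpow_const continuousOn_id
        intro t ht; left; exact (lt_of_lt_of_le hx0 ht.1).ne'
  have hFint : IntervalIntegrable (fun t : ℝ => t ^ (γ - 1) * ∫ u in t..(1:ℝ), u ^ (ρ - 1))
      volume x 1 := (hFcont.mono (by rw [uIcc_of_le hx])).intervalIntegrable
  have hH0 : 0 ≤ Hso γ ρ x := by
    rw [hrw]
    apply intervalIntegral.integral_nonneg hx
    intro t ht
    exact mul_nonneg (Real.rpow_nonneg (lt_of_lt_of_le hx0 ht.1).le _) (hinner_nonneg t ht)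
  rw [abs_of_nonneg hH0, hrw]
  have key : (∫ t in x..(1:ℝ), t ^ (γ - 1) * ∫ u in t..(1:ℝ), u ^ (ρ - 1))
      ≤ ∫ t in x..(1:ℝ), t ^ (c - 1) / ε := by
    apply intervalIntegral.integral_mono_on hx hFint ((rpow_intable hx0 one_pos).div_const ε)
    intro t ht
    have ht0 : (0:ℝ) < t := lt_of_lt_of_le hx0 ht.1
    calc t ^ (γ - 1) * ∫ u in t..(1:ℝ), u ^ (ρ - 1)
        ≤ t ^ (γ - 1) * (t ^ (ρ - ε) / ε) :=
          mul_le_mul_of_nonneg_left (hinner_le t ht) (Real.rpow_nonneg ht0.le _)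
      _ = t ^ (γ - 1 + (ρ - ε)) / ε := by rw [Real.rpow_add ht0]; ring
      _ ≤ t ^ (c - 1) / ε := by
          have h := Real.rpow_le_rpow_of_exponent_ge ht0 ht.2
            (show c - 1 ≤ γ - 1 + (ρ - ε) by rw [hc]; linarith [min_le_left (γ + ρ) 0])
          exact (div_le_div_iff_of_pos_right hε).mpr h
  have hval : (∫ t in x..(1:ℝ), t ^ (c - 1) / ε) = (1 - x ^ c) / c / ε := by
    rw [intervalIntegral.integral_div, integral_rpow (Or.inr ⟨by intro h; rw [sub_eq_neg_self] at h; linarith, by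
      rw [uIcc_of_le hx]; rintro ⟨h, -⟩; linarith⟩)]
    norm_num
  have hxc : (0:ℝ) ≤ x ^ c := Real.rpow_nonneg hx0.le _
  have hnc : (0:ℝ) < -c * ε := mul_pos (by linarith) hε
  have e1 : (1 - x ^ c) / c / ε = (x ^ c - 1) / (-c * ε) := by
    rw [div_div, show (x ^ c - 1) = -(1 - x ^ c) by ring,
      show (-c) * ε = -(c * ε) by ring, neg_div_neg_eq]
  calc (∫ t in x..(1:ℝ), t ^ (γ - 1) * ∫ u in t..(1:ℝ), u ^ (ρ - 1))
      ≤ (x ^ c - 1) / (-c * ε) := by rw [← e1, ← hval]; exact key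
    _ ≤ x ^ c / (-c * ε) := by
        apply (div_le_div_iff_of_pos_right hnc).mpr; linarith
    _ ≤ x ^ c / ε ^ 2 := by
        apply div_le_div_of_nonneg_left hxc (by positivity) (by nlinarith)


/-- **Uniform bound on the second-order function along the exponential
reparametrization** (eq. (33)): for every `γ₀ ∈ ℝ`, `ρ ≤ 0` and `ε > 0` there is
`C > 0` with `|H_{γ₀,ρ}(1/(-log s))| ≤ C s^{-ε} (1-s)^{min(-γ₀,0)-ε}` for all
`s ∈ (0,1)`. -/
theorem Hso_uniform_bound (γ₀ ρ ε : ℝ) (hρ : ρ ≤ 0) (hε : 0 < ε) :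
    ∃ C > (0:ℝ), ∀ s ∈ Set.Ioo (0:ℝ) 1,
      |Hso γ₀ ρ (1 / (-Real.log s))| ≤
        C * s ^ (-ε) * (1 - s) ^ (min (-γ₀) 0 - ε) := by
  set g := max γ₀ 0 with hg
  set M := -(min (γ₀ + ρ) 0 - ε) with hM
  have hM0 : 0 < M := by
    rw [hM]; have := min_le_right (γ₀ + ρ) 0; linarith
  have hq0 : (0:ℝ) ≤ (M / ε) ^ M := Real.rpow_nonneg (by positivity) _
  refine ⟨(1 + (M / ε) ^ M) / ε ^ 2, by positivity, ?_⟩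
  intro s hs
  obtain ⟨hs0, hs1⟩ := hs
  have hL0 : 0 < -Real.log s := by
    have := Real.log_neg hs0 hs1; linarith
  set L := -Real.log s with hLdef
  have hx0 : 0 < 1 / L := by positivity
  have hmin : min (-γ₀) 0 - ε = -(g + ε) := by
    rw [hg, ← neg_zero, min_neg_neg, neg_zero]; ring
  have h1s0 : 0 < 1 - s := by linarith
  have h1s1 : 1 - s ≤ 1 := by linarith
  have hg0 : 0 ≤ g := le_max_right _ _
  have hsε1 : 1 ≤ s ^ (-ε) := by
    have hle : s ^ ε ≤ 1 := Real.rpow_le_one hs0.le hs1.le hε.le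
    have hp : 0 < s ^ ε := Real.rpow_pos_of_pos hs0 ε
    rw [Real.rpow_neg hs0.le]
    exact (one_le_inv₀ hp).mpr hle
  have hB1 : 1 ≤ (1 - s) ^ (min (-γ₀) 0 - ε) := by
    apply Real.one_le_rpow_of_pos_of_le_one_of_nonpos h1s0 h1s1
    rw [hmin]; linarith
  have hB0 : 0 < (1 - s) ^ (min (-γ₀) 0 - ε) := Real.rpow_pos_of_pos h1s0 _
  rcases le_or_gt L 1 with hL | hL
  · -- x = 1/L ≥ 1
    have hx1 : (1:ℝ) ≤ 1 / L := by rw [le_div_iff₀ hL0]; linarith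
    have hb := Hso_bound_ge_one γ₀ ρ ε (1 / L) hρ hε hx1
    have hL1s : 1 - s ≤ L := by
      have := Real.log_le_sub_one_of_pos hs0
      rw [hLdef]; linarith
    have hxle : 1 / L ≤ 1 / (1 - s) := one_div_le_one_div_of_le h1s0 hL1s
    have h2 : (1 / L) ^ (g + ε) ≤ (1 - s) ^ (-(g + ε)) := by
      have h := Real.rpow_le_rpow hx0.le hxle (by positivity : (0:ℝ) ≤ g + ε)
      rwa [one_div (1 - s), Real.inv_rpow h1s0.le, ← Real.rpow_neg h1s0.le] at h
    calc |Hso γ₀ ρ (1 / L)| ≤ (1 / L) ^ (g + ε) / ε ^ 2 := hb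
      _ ≤ (1 - s) ^ (-(g + ε)) / ε ^ 2 := by
          exact (div_le_div_iff_of_pos_right (by positivity)).mpr h2
      _ = 1 / ε ^ 2 * (1 - s) ^ (min (-γ₀) 0 - ε) := by rw [hmin]; ring
      _ ≤ (1 + (M / ε) ^ M) / ε ^ 2 * s ^ (-ε) * (1 - s) ^ (min (-γ₀) 0 - ε) := by
          apply mul_le_mul_of_nonneg_right _ hB0.le
          calc 1 / ε ^ 2 ≤ (1 + (M / ε) ^ M) / ε ^ 2 := by
                apply (div_le_div_iff_of_pos_right (by positivity)).mpr; linarith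
            _ = (1 + (M / ε) ^ M) / ε ^ 2 * 1 := (mul_one _).symm
            _ ≤ _ := mul_le_mul_of_nonneg_left hsε1 (by positivity)
  · -- x = 1/L ≤ 1
    have hx1 : 1 / L ≤ 1 := by rw [div_le_one hL0]; linarith
    have hb := Hso_bound_le_one γ₀ ρ ε (1 / L) hρ hε hx0 hx1
    have hexp : min (γ₀ + ρ) 0 - ε = -M := by rw [hM]; ring
    have h1 : (1 / L) ^ (-M) = L ^ M := by
      rw [one_div, Real.rpow_neg (by positivity), Real.inv_rpow hL0.le, inv_inv]
    have hs_exp : s ^ (-ε) = Real.exp (ε * L) := by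
      rw [Real.rpow_def_of_pos hs0]
      congr 1
      rw [hLdef]; ring
    have h2 : L ^ M ≤ (M / ε) ^ M * s ^ (-ε) := by
      have ht : ε / M * L ≤ Real.exp (ε / M * L) := by
        have := Real.add_one_le_exp (ε / M * L); linarith
      have hstep : L ≤ M / ε * Real.exp (ε / M * L) := by
        calc L = M / ε * (ε / M * L) := by field_simp; try ring
          _ ≤ M / ε * Real.exp (ε / M * L) :=
              mul_le_mul_of_nonneg_left ht (by positivity)
      calc L ^ M ≤ (M / ε * Real.exp (ε / M * L)) ^ M :=
            Real.rpow_le_rpow hL0.le hstep hM0.le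
        _ = (M / ε) ^ M * Real.exp (ε / M * L) ^ M :=
            Real.mul_rpow (by positivity) (by positivity)
        _ = (M / ε) ^ M * Real.exp (ε * L) := by
            rw [← Real.exp_mul]
            congr 2
            field_simp; try ring
        _ = (M / ε) ^ M * s ^ (-ε) := by rw [hs_exp]
    calc |Hso γ₀ ρ (1 / L)| ≤ (1 / L) ^ (min (γ₀ + ρ) 0 - ε) / ε ^ 2 := hb
      _ = L ^ M / ε ^ 2 := by rw [hexp, h1]
      _ ≤ (M / ε) ^ M * s ^ (-ε) / ε ^ 2 := by
          exact (div_le_div_iff_of_pos_right (by positivity)).mpr h2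
      _ = (M / ε) ^ M / ε ^ 2 * s ^ (-ε) := by ring
      _ ≤ (1 + (M / ε) ^ M) / ε ^ 2 * s ^ (-ε) := by
          apply mul_le_mul_of_nonneg_right _ (by positivity)
          apply (div_le_div_iff_of_pos_right (by positivity)).mpr; linarith
      _ ≤ (1 + (M / ε) ^ M) / ε ^ 2 * s ^ (-ε) * (1 - s) ^ (min (-γ₀) 0 - ε) :=
          le_mul_of_one_le_right (by positivity) hB1

end BMMLE
end
end

section
/- Closed form for the location component of the bias vector (case ρ < 0): let γ0 > −1/2, γ0 ≠ 0, ρ < 0 with γ0 + ρ ≠ 0, and θ0 = (γ0, 0, 1). Then ∫_0^1 (∂²ℓ/∂x∂μ)(θ0, Q_{γ0}(s)) · H_{γ0,ρ}(1/(−log s)) ds = (1+γ0)/(γ0·ρ·(γ0+ρ)) · ( −(γ0+ρ)·Γ(1+γ0) + (1+γ0)·ρ·Γ(1+2γ0) + γ0·(1−ρ)·Γ(1+γ0−ρ) ), where Γ is Euler's Gamma function. -/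
open MeasureTheory ProbabilityTheory Filter Real Topology Matrix Set

noncomputable section

namespace BMMLE

section Aux

variable {γ ρ : ℝ}

lemma update_eval (γ t : ℝ) : Function.update (θ₀ γ) 1 t = ![γ, t, 1] := by
  funext j
  fin_cases j <;> simp [Function.update, θ₀]

lemma ll_update (t x : ℝ) (hγ0 : γ ≠ 0) :
    ll (Function.update (θ₀ γ) 1 t) x
      = -(1 + 1/γ) * Real.log (1 + γ * (x - t)) - (1 + γ * (x - t)) ^ (-1/γ) := by
  rw [update_eval]
  simp [ll, hγ0]

lemma score_one (x : ℝ) (hγ0 : γ ≠ 0) (hx : 0 < 1 + γ * x) :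
    score 1 (θ₀ γ) x = (1 + γ) * (1 + γ * x) ^ (-1 : ℝ) - (1 + γ * x) ^ (-1/γ - 1) := by
  have hθ1 : θ₀ γ 1 = 0 := by simp [θ₀]
  rw [score, pd, hθ1]
  have hz : ∀ t : ℝ, HasDerivAt (fun t => 1 + γ * (x - t)) (-γ) t := by
    intro t
    simpa using ((hasDerivAt_id t).const_sub x).const_mul γ |>.const_add 1
  have h1 : HasDerivAt (fun t => ll (Function.update (θ₀ γ) 1 t) x)
      ((1 + γ) * (1 + γ * x) ^ (-1 : ℝ) - (1 + γ * x) ^ (-1/γ - 1)) 0 := by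
    have hz0 : (1 : ℝ) + γ * (x - 0) = 1 + γ * x := by ring
    have hlog : HasDerivAt (fun t => Real.log (1 + γ * (x - t))) (-γ / (1 + γ * x)) 0 := by
      simpa [hz0] using (hz 0).log (by rw [hz0]; exact hx.ne')
    have hpow : HasDerivAt (fun t => (1 + γ * (x - t)) ^ (-1/γ))
        (-γ * (-1/γ) * (1 + γ * x) ^ (-1/γ - 1)) 0 := by
      have := (hz 0).rpow_const (p := -1/γ) (Or.inl (by rw [hz0]; exact hx.ne'))
      simpa [hz0] using this
    have hfun : (fun t => ll (Function.update (θ₀ γ) 1 t) x)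
        = fun t => -(1 + 1/γ) * Real.log (1 + γ * (x - t)) - (1 + γ * (x - t)) ^ (-1/γ) :=
      funext fun t => ll_update t x hγ0
    rw [hfun]
    refine ((hlog.const_mul (-(1 + 1/γ))).sub hpow).congr_deriv ?_
    rw [Real.rpow_neg_one]
    field_simp
    ring
  exact h1.deriv

lemma score_one_eventually (x : ℝ) (hγ0 : γ ≠ 0) (hx : 0 < 1 + γ * x) :
    (fun y => score 1 (θ₀ γ) y)
      =ᶠ[nhds x] fun y => (1 + γ) * (1 + γ * y) ^ (-1 : ℝ) - (1 + γ * y) ^ (-1/γ - 1) := by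
  have hcont : Continuous fun y : ℝ => 1 + γ * y := by continuity
  have hopen : IsOpen {y : ℝ | 0 < 1 + γ * y} := isOpen_lt continuous_const hcont
  filter_upwards [hopen.mem_nhds hx] with y hy
  exact score_one y hγ0 hy

lemma dxscore_one (x : ℝ) (hγ0 : γ ≠ 0) (hx : 0 < 1 + γ * x) :
    dxscore 1 (θ₀ γ) x
      = -γ * (1 + γ) * (1 + γ * x) ^ (-2 : ℝ) + (1 + γ) * (1 + γ * x) ^ (-1/γ - 2) := by
  rw [dxscore, (score_one_eventually x hγ0 hx).deriv_eq]
  have hz : HasDerivAt (fun y : ℝ => 1 + γ * y) γ x := by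
    simpa using ((hasDerivAt_id x).const_mul γ).const_add 1
  have h1 : HasDerivAt (fun y => (1 + γ) * (1 + γ * y) ^ (-1 : ℝ) - (1 + γ * y) ^ (-1/γ - 1))
      ((1 + γ) * (γ * (-1) * (1 + γ * x) ^ (-1 - 1 : ℝ))
        - γ * (-1/γ - 1) * (1 + γ * x) ^ (-1/γ - 1 - 1)) x := by
    exact ((hz.rpow_const (Or.inl hx.ne')).const_mul (1 + γ)).sub
      (hz.rpow_const (Or.inl hx.ne'))
  rw [h1.deriv]
  have e1 : (-1 - 1 : ℝ) = -2 := by norm_num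
  have e2 : (-1/γ - 1 - 1 : ℝ) = -1/γ - 2 := by ring
  rw [e1, e2]
  field_simp
  ring

lemma Hso_eq (hγ0 : γ ≠ 0) (hρ : ρ ≠ 0) (hγρ : γ + ρ ≠ 0) {x : ℝ} (hx : 0 < x) :
    Hso γ ρ x = (1/ρ) * ((x ^ (γ+ρ) - 1) / (γ+ρ) - (x ^ γ - 1) / γ) := by
  have hmem : ∀ t ∈ uIcc (1:ℝ) x, 0 < t := by
    intro t ht
    rcases le_or_gt 1 x with h | h
    · rw [uIcc_of_le h] at ht; linarith [ht.1]
    · rw [uIcc_of_ge h.le] at ht; linarith [ht.1, hx]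
  have h0 : ∀ t ∈ uIcc (1:ℝ) x, (0:ℝ) ∉ uIcc (1:ℝ) t := by
    intro t ht h0t
    exact absurd rfl (hmem 0 (uIcc_subset_uIcc left_mem_uIcc ht h0t)).ne'
  have hcongr : Hso γ ρ x = ∫ t in (1:ℝ)..x, ((1/ρ) * t ^ (γ+ρ-1) - (1/ρ) * t ^ (γ-1)) := by
    rw [Hso]
    apply intervalIntegral.integral_congr
    intro t ht
    have htpos := hmem t ht
    show t ^ (γ - 1) * (∫ u in (1:ℝ)..t, u ^ (ρ - 1)) = 1/ρ * t ^ (γ+ρ-1) - 1/ρ * t ^ (γ-1)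
    rw [integral_rpow (Or.inr ⟨by intro h; apply hρ; linarith, h0 t ht⟩)]
    have : ρ - 1 + 1 = ρ := by ring
    rw [this]
    rw [show t ^ (γ+ρ-1) = t ^ (γ-1) * t ^ ρ by
      rw [← Real.rpow_add htpos]; ring_nf]
    field_simp
    rw [Real.one_rpow]
  rw [hcongr, intervalIntegral.integral_sub, intervalIntegral.integral_const_mul,
    intervalIntegral.integral_const_mul,
    integral_rpow (Or.inr ⟨by intro h; apply hγρ; linarith, by
      intro h; exact absurd rfl (hmem 0 h).ne'⟩),
    integral_rpow (Or.inr ⟨by intro h; apply hγ0; linarith, by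
      intro h; exact absurd rfl (hmem 0 h).ne'⟩)]
  · have e1 : γ + ρ - 1 + 1 = γ + ρ := by ring
    have e2 : γ - 1 + 1 = γ := by ring
    rw [e1, e2, Real.one_rpow, Real.one_rpow]
    ring
  · exact (intervalIntegral.intervalIntegrable_rpow
      (Or.inr fun h => absurd rfl (hmem 0 h).ne')).const_mul _
  · exact (intervalIntegral.intervalIntegrable_rpow
      (Or.inr fun h => absurd rfl (hmem 0 h).ne')).const_mul _

lemma image_exp_neg : (fun t : ℝ => Real.exp (-t)) '' Set.Ioi 0 = Set.Ioo 0 1 := by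
  ext x
  constructor
  · rintro ⟨t, ht, rfl⟩
    exact ⟨Real.exp_pos _, by
      rw [← Real.exp_zero]; exact Real.exp_lt_exp.2 (by linarith [Set.mem_Ioi.1 ht])⟩
  · rintro ⟨hx0, hx1⟩
    exact ⟨-Real.log x, by simpa using Real.log_neg hx0 hx1, by simp [Real.exp_log hx0]⟩

lemma cov (g : ℝ → ℝ) :
    ∫ s in Set.Ioo (0:ℝ) 1, g s = ∫ t in Set.Ioi (0:ℝ), Real.exp (-t) * g (Real.exp (-t)) := by
  have hd : ∀ t : ℝ, HasDerivAt (fun t : ℝ => Real.exp (-t)) (-Real.exp (-t)) t := by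
    intro t
    simpa using (hasDerivAt_neg t).exp
  have hinj : Set.InjOn (fun t : ℝ => Real.exp (-t)) (Set.Ioi 0) := fun a _ b _ hab => by
    have := Real.exp_injective hab
    exact neg_injective this
  rw [← image_exp_neg,
    MeasureTheory.integral_image_eq_integral_abs_deriv_smul measurableSet_Ioi
      (fun t _ => (hd t).hasDerivWithinAt) hinj g]
  apply MeasureTheory.setIntegral_congr_fun measurableSet_Ioi
  intro t _
  show |(-Real.exp (-t))| • g (Real.exp (-t)) = _
  rw [smul_eq_mul, abs_neg, abs_of_pos (Real.exp_pos _)]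

lemma gamma_piece (c : ℝ) {a : ℝ} (ha : 0 < a) :
    ∫ t in Set.Ioi (0:ℝ), c * (Real.exp (-t) * t ^ (a - 1)) = c * Real.Gamma a := by
  rw [MeasureTheory.integral_const_mul, ← Real.Gamma_eq_integral ha]

lemma pointwise_eq (hγ0 : γ ≠ 0) (hρ : ρ ≠ 0) (hγρ : γ + ρ ≠ 0) {t : ℝ} (ht : 0 < t) :
    Real.exp (-t) * (dxscore 1 (θ₀ γ) (Qgev γ (Real.exp (-t)))
        * Hso γ ρ (1 / (-Real.log (Real.exp (-t)))))
      = ((1+γ)/(ρ*(γ+ρ))) * (Real.exp (-t) * t ^ ((2+γ-ρ) - 1))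
        + ((1+γ)/(ρ*γ) - (1+γ)/(ρ*(γ+ρ))) * (Real.exp (-t) * t ^ ((2+2*γ) - 1))
        + (-(γ*(1+γ))/(ρ*(γ+ρ))) * (Real.exp (-t) * t ^ ((1+γ-ρ) - 1))
        + (γ*(1+γ)/(ρ*(γ+ρ)) - (1+γ)/ρ) * (Real.exp (-t) * t ^ ((1+2*γ) - 1))
        + (-(1+γ)/(ρ*γ)) * (Real.exp (-t) * t ^ ((2+γ) - 1))
        + ((1+γ)/ρ) * (Real.exp (-t) * t ^ ((1+γ) - 1)) := by
  have hlog : -Real.log (Real.exp (-t)) = t := by simp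
  have hQ : Qgev γ (Real.exp (-t)) = (t ^ (-γ) - 1) / γ := by
    rw [Qgev, if_neg hγ0, hlog]
  have hz : 1 + γ * Qgev γ (Real.exp (-t)) = t ^ (-γ) := by
    rw [hQ]; field_simp; ring
  have hzpos : (0:ℝ) < t ^ (-γ) := Real.rpow_pos_of_pos ht _
  have hx : 0 < 1 + γ * Qgev γ (Real.exp (-t)) := by rw [hz]; exact hzpos
  rw [dxscore_one _ hγ0 hx, hz, hlog, Hso_eq hγ0 hρ hγρ (by positivity : (0:ℝ) < 1/t)]
  have e1 : ((t:ℝ) ^ (-γ)) ^ (-2 : ℝ) = t ^ γ * t ^ γ := by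
    rw [← Real.rpow_mul ht.le, show (-γ) * (-2:ℝ) = γ + γ by ring, Real.rpow_add ht]
  have e2 : ((t:ℝ) ^ (-γ)) ^ (-1/γ - 2) = t * (t ^ γ * t ^ γ) := by
    rw [← Real.rpow_mul ht.le, show (-γ) * (-1/γ - 2) = 1 + (γ + γ) from by
      field_simp; ring, Real.rpow_add ht, Real.rpow_add ht, Real.rpow_one]
  have e3 : ((1:ℝ)/t) ^ (γ + ρ) = (t ^ γ * t ^ ρ)⁻¹ := by
    rw [one_div, Real.inv_rpow ht.le, Real.rpow_add ht]
  have e4 : ((1:ℝ)/t) ^ γ = (t ^ γ)⁻¹ := by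
    rw [one_div, Real.inv_rpow ht.le]
  have f1 : (t:ℝ) ^ ((2+γ-ρ) - 1) = t * t ^ γ * (t ^ ρ)⁻¹ := by
    rw [show (2+γ-ρ) - 1 = (1 + γ) + (-ρ) by ring, Real.rpow_add ht, Real.rpow_add ht,
      Real.rpow_one, Real.rpow_neg ht.le]
  have f2 : (t:ℝ) ^ ((2+2*γ) - 1) = t * (t ^ γ * t ^ γ) := by
    rw [show (2+2*γ) - 1 = 1 + (γ + γ) by ring, Real.rpow_add ht, Real.rpow_add ht,
      Real.rpow_one]
  have f3 : (t:ℝ) ^ ((1+γ-ρ) - 1) = t ^ γ * (t ^ ρ)⁻¹ := by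
    rw [show (1+γ-ρ) - 1 = γ + (-ρ) by ring, Real.rpow_add ht, Real.rpow_neg ht.le]
  have f4 : (t:ℝ) ^ ((1+2*γ) - 1) = t ^ γ * t ^ γ := by
    rw [show (1+2*γ) - 1 = γ + γ by ring, Real.rpow_add ht]
  have f5 : (t:ℝ) ^ ((2+γ) - 1) = t * t ^ γ := by
    rw [show (2+γ) - 1 = 1 + γ by ring, Real.rpow_add ht, Real.rpow_one]
  have f6 : (t:ℝ) ^ ((1+γ) - 1) = t ^ γ := by
    rw [show (1+γ) - 1 = γ by ring]
  rw [e1, e2, e3, e4, f1, f2, f3, f4, f5, f6]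
  have hA : (0:ℝ) < t ^ γ := Real.rpow_pos_of_pos ht _
  have hB : (0:ℝ) < t ^ ρ := Real.rpow_pos_of_pos ht _
  field_simp
  ring

end Aux
end BMMLE

namespace BMMLE

/-- **Closed form for the location component of the bias vector, case `ρ < 0`**
(Appendix A): for `γ₀ > -1/2`, `γ₀ ≠ 0`, `ρ < 0`, `γ₀ + ρ ≠ 0`,
`∫₀¹ ∂²ℓ/∂x∂μ(θ₀, Q_{γ₀}(s)) H_{γ₀,ρ}(1/(-log s)) ds
  = (1+γ₀)/(γ₀ρ(γ₀+ρ)) (-(γ₀+ρ)Γ(1+γ₀) + (1+γ₀)ρΓ(1+2γ₀) + γ₀(1-ρ)Γ(1+γ₀-ρ))`. -/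
theorem bias_location_component_closed_form
    (γ₀ ρ : ℝ) (hγ : -(1/2) < γ₀) (hγ0 : γ₀ ≠ 0) (hρ : ρ < 0) (hγρ : γ₀ + ρ ≠ 0) :
    ∫ s in Set.Ioo (0:ℝ) 1,
        dxscore 1 (θ₀ γ₀) (Qgev γ₀ s) * Hso γ₀ ρ (1 / (-Real.log s))
      = (1 + γ₀) / (γ₀ * ρ * (γ₀ + ρ)) *
        (-(γ₀ + ρ) * Real.Gamma (1 + γ₀) + (1 + γ₀) * ρ * Real.Gamma (1 + 2 * γ₀)
          + γ₀ * (1 - ρ) * Real.Gamma (1 + γ₀ - ρ)) := by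
  have h1γ : (0:ℝ) < 1 + γ₀ := by linarith
  have h12γ : (0:ℝ) < 1 + 2*γ₀ := by linarith
  have h1γρ : (0:ℝ) < 1 + γ₀ - ρ := by linarith
  have h2γρ : (0:ℝ) < 2 + γ₀ - ρ := by linarith
  have h22γ : (0:ℝ) < 2 + 2*γ₀ := by linarith
  have h2γ : (0:ℝ) < 2 + γ₀ := by linarith
  have hρ0 : ρ ≠ 0 := hρ.ne
  rw [cov]
  rw [MeasureTheory.setIntegral_congr_fun measurableSet_Ioi
    (fun t ht => pointwise_eq hγ0 hρ0 hγρ ht)]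
  have I1 : MeasureTheory.IntegrableOn
      (fun t => ((1+γ₀)/(ρ*(γ₀+ρ))) * (Real.exp (-t) * t ^ ((2+γ₀-ρ) - 1)))
      (Set.Ioi 0) := (Real.GammaIntegral_convergent h2γρ).const_mul _
  have I2 : MeasureTheory.IntegrableOn
      (fun t => ((1+γ₀)/(ρ*γ₀) - (1+γ₀)/(ρ*(γ₀+ρ))) * (Real.exp (-t) * t ^ ((2+2*γ₀) - 1)))
      (Set.Ioi 0) := (Real.GammaIntegral_convergent h22γ).const_mul _
  have I3 : MeasureTheory.IntegrableOn
      (fun t => (-(γ₀*(1+γ₀))/(ρ*(γ₀+ρ))) * (Real.exp (-t) * t ^ ((1+γ₀-ρ) - 1)))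
      (Set.Ioi 0) := (Real.GammaIntegral_convergent h1γρ).const_mul _
  have I4 : MeasureTheory.IntegrableOn
      (fun t => (γ₀*(1+γ₀)/(ρ*(γ₀+ρ)) - (1+γ₀)/ρ) * (Real.exp (-t) * t ^ ((1+2*γ₀) - 1)))
      (Set.Ioi 0) := (Real.GammaIntegral_convergent h12γ).const_mul _
  have I5 : MeasureTheory.IntegrableOn
      (fun t => (-(1+γ₀)/(ρ*γ₀)) * (Real.exp (-t) * t ^ ((2+γ₀) - 1)))
      (Set.Ioi 0) := (Real.GammaIntegral_convergent h2γ).const_mul _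
  have I6 : MeasureTheory.IntegrableOn
      (fun t => ((1+γ₀)/ρ) * (Real.exp (-t) * t ^ ((1+γ₀) - 1)))
      (Set.Ioi 0) := (Real.GammaIntegral_convergent h1γ).const_mul _
  have J2 : MeasureTheory.IntegrableOn
      (fun t => ((1+γ₀)/(ρ*(γ₀+ρ))) * (Real.exp (-t) * t ^ ((2+γ₀-ρ) - 1))
        + ((1+γ₀)/(ρ*γ₀) - (1+γ₀)/(ρ*(γ₀+ρ))) * (Real.exp (-t) * t ^ ((2+2*γ₀) - 1)))
      (Set.Ioi 0) := I1.add I2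
  have J3 : MeasureTheory.IntegrableOn
      (fun t => ((1+γ₀)/(ρ*(γ₀+ρ))) * (Real.exp (-t) * t ^ ((2+γ₀-ρ) - 1))
        + ((1+γ₀)/(ρ*γ₀) - (1+γ₀)/(ρ*(γ₀+ρ))) * (Real.exp (-t) * t ^ ((2+2*γ₀) - 1))
        + (-(γ₀*(1+γ₀))/(ρ*(γ₀+ρ))) * (Real.exp (-t) * t ^ ((1+γ₀-ρ) - 1)))
      (Set.Ioi 0) := J2.add I3
  have J4 : MeasureTheory.IntegrableOn
      (fun t => ((1+γ₀)/(ρ*(γ₀+ρ))) * (Real.exp (-t) * t ^ ((2+γ₀-ρ) - 1))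
        + ((1+γ₀)/(ρ*γ₀) - (1+γ₀)/(ρ*(γ₀+ρ))) * (Real.exp (-t) * t ^ ((2+2*γ₀) - 1))
        + (-(γ₀*(1+γ₀))/(ρ*(γ₀+ρ))) * (Real.exp (-t) * t ^ ((1+γ₀-ρ) - 1))
        + (γ₀*(1+γ₀)/(ρ*(γ₀+ρ)) - (1+γ₀)/ρ) * (Real.exp (-t) * t ^ ((1+2*γ₀) - 1)))
      (Set.Ioi 0) := J3.add I4
  have J5 : MeasureTheory.IntegrableOn
      (fun t => ((1+γ₀)/(ρ*(γ₀+ρ))) * (Real.exp (-t) * t ^ ((2+γ₀-ρ) - 1))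
        + ((1+γ₀)/(ρ*γ₀) - (1+γ₀)/(ρ*(γ₀+ρ))) * (Real.exp (-t) * t ^ ((2+2*γ₀) - 1))
        + (-(γ₀*(1+γ₀))/(ρ*(γ₀+ρ))) * (Real.exp (-t) * t ^ ((1+γ₀-ρ) - 1))
        + (γ₀*(1+γ₀)/(ρ*(γ₀+ρ)) - (1+γ₀)/ρ) * (Real.exp (-t) * t ^ ((1+2*γ₀) - 1))
        + (-(1+γ₀)/(ρ*γ₀)) * (Real.exp (-t) * t ^ ((2+γ₀) - 1)))
      (Set.Ioi 0) := J4.add I5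
  rw [MeasureTheory.integral_add J5 I6,
    MeasureTheory.integral_add J4 I5,
    MeasureTheory.integral_add J3 I4,
    MeasureTheory.integral_add J2 I3,
    MeasureTheory.integral_add I1 I2,
    gamma_piece _ h2γρ, gamma_piece _ h22γ, gamma_piece _ h1γρ,
    gamma_piece _ h12γ, gamma_piece _ h2γ, gamma_piece _ h1γ]
  rw [show (2:ℝ)+γ₀-ρ = (1+γ₀-ρ)+1 by ring, Real.Gamma_add_one h1γρ.ne',
    show (2:ℝ)+2*γ₀ = (1+2*γ₀)+1 by ring, Real.Gamma_add_one h12γ.ne',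
    show (2:ℝ)+γ₀ = (1+γ₀)+1 by ring, Real.Gamma_add_one h1γ.ne']
  field_simp
  ring

end BMMLE
end
end
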